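/- arXiv:1812.06706 — 9 statements merged into one kernel-verified Lean document; each statement's English description precedes it below -/
import Mathlib

section
/- In any edge-coloring of the complete graph K_4 using at least 4 distinct colors, there exists a rainbow P_4, i.e., a path on all 4 vertices whose three edges receive three pairwise distinct colors. -/
def eidx : Fin 4 → Fin 4 → Fin 6 := ![![0,0,1,2],![0,0,3,4],![1,3,0,5],![2,4,5,0]]
def edg : Fin 6 → Sym2 (Fin 4) := ![s(0,1),s(0,2),s(0,3),s(1,2),s(1,3),s(2,3)]
def E1 : Fin 12 → Fin 6 := ![0,0,1,1,2,2,0,0,1,1,2,2]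
def E2 : Fin 12 → Fin 6 := ![3,4,3,5,4,5,1,2,0,2,0,1]
def E3 : Fin 12 → Fin 6 := ![5,5,4,4,3,3,5,5,4,4,3,3]

lemma eidx_edge : ∀ x y : Fin 4, x ≠ y → edg (eidx x y) = s(x,y) := by decide
lemma edge_mem : ∀ i : Fin 6, ∃ u v : Fin 4, u ≠ v ∧ s(u,v) = edg i := by decide
lemma edge_surj : ∀ u v : Fin 4, u ≠ v → ∃ i, edg i = s(u,v) := by decide

lemma pathTab : ∀ p : Fin 12, ∃ x y z w : Fin 4,
    x ≠ y ∧ x ≠ z ∧ x ≠ w ∧ y ≠ z ∧ y ≠ w ∧ z ≠ w ∧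
    eidx x y = E1 p ∧ eidx y z = E2 p ∧ eidx z w = E3 p := by decide

set_option maxRecDepth 100000 in
set_option maxHeartbeats 1000000 in
lemma key : ∀ a0 a1 a2 a3 a4 a5 : Fin 6, a0 ≤ 0 → a1 ≤ 1 → a2 ≤ 2 → a3 ≤ 3 → a4 ≤ 4 →
    (∀ i : Fin 6, ![a0,a1,a2,a3,a4,a5] (![a0,a1,a2,a3,a4,a5] i) = ![a0,a1,a2,a3,a4,a5] i) →
    4 ≤ (Finset.univ.filter (fun i => ![a0,a1,a2,a3,a4,a5] i = i)).card →
    ∃ p : Fin 12, ![a0,a1,a2,a3,a4,a5] (E1 p) ≠ ![a0,a1,a2,a3,a4,a5] (E2 p) ∧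
      ![a0,a1,a2,a3,a4,a5] (E2 p) ≠ ![a0,a1,a2,a3,a4,a5] (E3 p) ∧
      ![a0,a1,a2,a3,a4,a5] (E1 p) ≠ ![a0,a1,a2,a3,a4,a5] (E3 p) := by decide

/-- In any edge-coloring of `K_4` using at least 4 distinct colors there is a
rainbow `P_4`: a path on all four vertices whose three edges get pairwise
distinct colors. -/
theorem stmt_5 {C : Type*} (c : Sym2 (Fin 4) → C)
    (hcolors : 4 ≤ Set.ncard {col : C | ∃ u v : Fin 4, u ≠ v ∧ c s(u, v) = col}) :
    ∃ x y z w : Fin 4, x ≠ y ∧ x ≠ z ∧ x ≠ w ∧ y ≠ z ∧ y ≠ w ∧ z ≠ w ∧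
      c s(x, y) ≠ c s(y, z) ∧ c s(y, z) ≠ c s(z, w) ∧ c s(x, y) ≠ c s(z, w) := by
  classical
  set col : Fin 6 → C := fun i => c (edg i) with hcoldef
  -- the set of used colors is the image of `col`
  have hS : {x : C | ∃ u v : Fin 4, u ≠ v ∧ c s(u, v) = x}
      = ↑(Finset.image col Finset.univ) := by
    ext x
    simp only [Set.mem_setOf_eq, Finset.coe_image, Set.mem_image, Finset.mem_coe,
      Finset.mem_univ, true_and, Finset.coe_univ, Set.image_univ, Set.mem_range]
    constructor
    · rintro ⟨u, v, huv, rfl⟩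
      obtain ⟨i, hi⟩ := edge_surj u v huv
      exact ⟨i, by rw [hcoldef]; simp [hi]⟩
    · rintro ⟨i, rfl⟩
      obtain ⟨u, v, huv, he⟩ := edge_mem i
      exact ⟨u, v, huv, by rw [hcoldef]; simp [he]⟩
  rw [hS, Set.ncard_coe_finset] at hcolors
  -- `f i` = least index with the same color
  have hmem : ∀ i : Fin 6, i ∈ Finset.univ.filter (fun j => col j = col i) := by
    intro i; simp
  set f : Fin 6 → Fin 6 :=
    fun i => (Finset.univ.filter (fun j => col j = col i)).min' ⟨i, hmem i⟩ with hfdef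
  have hle : ∀ i, f i ≤ i := fun i => Finset.min'_le _ i (hmem i)
  have hcolf : ∀ i, col (f i) = col i := by
    intro i
    have := Finset.min'_mem (Finset.univ.filter (fun j => col j = col i)) ⟨i, hmem i⟩
    simpa [hfdef] using (Finset.mem_filter.1 this).2
  have hcong : ∀ i j, col i = col j → f i = f j := by
    intro i j h
    simp only [hfdef, h]
  have hidem : ∀ i, f (f i) = f i := fun i => hcong _ _ (hcolf i)
  -- transfer the cardinality bound to `f`
  have h1 : Finset.image col Finset.univ = Finset.image col (Finset.image f Finset.univ) := by
    rw [Finset.image_image]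
    congr 1
    funext i
    exact (hcolf i).symm
  have h2 : 4 ≤ (Finset.image f Finset.univ).card :=
    le_trans (by rw [h1] at hcolors; exact le_trans hcolors (Finset.card_image_le)) le_rfl
  have h3 : Finset.image f Finset.univ = Finset.univ.filter (fun i => f i = i) := by
    ext j
    simp only [Finset.mem_image, Finset.mem_univ, true_and, Finset.mem_filter]
    constructor
    · rintro ⟨i, rfl⟩; exact hidem i
    · intro hj; exact ⟨j, hj⟩
  rw [h3] at h2
  -- apply the decidable core
  have hv : ![f 0, f 1, f 2, f 3, f 4, f 5] = f := by
    funext i; fin_cases i <;> rfl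
  have hkey := key (f 0) (f 1) (f 2) (f 3) (f 4) (f 5)
  rw [hv] at hkey
  obtain ⟨p, hp1, hp2, hp3⟩ := hkey (hle 0) (hle 1) (hle 2) (hle 3) (hle 4)
    (fun i => hidem i) h2
  obtain ⟨x, y, z, w, d1, d2, d3, d4, d5, d6, e1, e2, e3⟩ := pathTab p
  have cxy : c s(x, y) = col (E1 p) := by rw [← e1, ← eidx_edge x y d1]
  have cyz : c s(y, z) = col (E2 p) := by rw [← e2, ← eidx_edge y z d4]
  have czw : c s(z, w) = col (E3 p) := by rw [← e3, ← eidx_edge z w d6]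
  refine ⟨x, y, z, w, d1, d2, d3, d4, d5, d6, ?_, ?_, ?_⟩
  · rw [cxy, cyz]; exact fun h => hp1 (hcong _ _ h)
  · rw [cyz, czw]; exact fun h => hp2 (hcong _ _ h)
  · rw [cxy, czw]; exact fun h => hp3 (hcong _ _ h)
end

section
/- In the edge-coloring of K_9 induced by the parallel classes of any Kirkman triple system on 9 points, no set of 4 vertices induces a K_4 whose edges are partitioned into three perfect matchings by the coloring; hence every 4-set contains a rainbow P_4. -/
namespace Stmt7Aux

variable {T : Finset (Finset (Fin 9))} {par : Finset (Fin 9) → Fin 4} {c : Sym2 (Fin 9) → Fin 4}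

lemma pair_eq (hpair : ∀ u v : Fin 9, u ≠ v → ∃! t, t ∈ T ∧ u ∈ t ∧ v ∈ t)
    {t1 t2 : Finset (Fin 9)} {u v : Fin 9} (huv : u ≠ v)
    (h1 : t1 ∈ T) (h2 : t2 ∈ T) (hu1 : u ∈ t1) (hv1 : v ∈ t1)
    (hu2 : u ∈ t2) (hv2 : v ∈ t2) : t1 = t2 := by
  obtain ⟨t, -, ht⟩ := hpair u v huv
  rw [ht t1 ⟨h1, hu1, hv1⟩, ht t2 ⟨h2, hu2, hv2⟩]

lemma class_eq (hres : ∀ (i : Fin 4) (v : Fin 9), ∃! t, t ∈ T ∧ par t = i ∧ v ∈ t)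
    {t1 t2 : Finset (Fin 9)} {v : Fin 9}
    (h1 : t1 ∈ T) (h2 : t2 ∈ T) (hp : par t1 = par t2)
    (hv1 : v ∈ t1) (hv2 : v ∈ t2) : t1 = t2 := by
  obtain ⟨t, -, ht⟩ := hres (par t1) v
  rw [ht t1 ⟨h1, rfl, hv1⟩, ht t2 ⟨h2, hp.symm, hv2⟩]

lemma tri (hpair : ∀ u v : Fin 9, u ≠ v → ∃! t, t ∈ T ∧ u ∈ t ∧ v ∈ t)
    (hc : ∀ (u v : Fin 9) (t : Finset (Fin 9)),
      u ≠ v → t ∈ T → u ∈ t → v ∈ t → c s(u, v) = par t)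
    {u v : Fin 9} (huv : u ≠ v) :
    ∃ t ∈ T, u ∈ t ∧ v ∈ t ∧ par t = c s(u, v) := by
  obtain ⟨t, ⟨ht, hu, hv⟩, -⟩ := hpair u v huv
  exact ⟨t, ht, hu, hv, (hc u v t huv ht hu hv).symm⟩

lemma third_point (hsize : ∀ t ∈ T, t.card = 3)
    {t : Finset (Fin 9)} {u v : Fin 9} (ht : t ∈ T) (hu : u ∈ t) (hv : v ∈ t)
    (huv : u ≠ v) : ∃ p ∈ t, p ≠ u ∧ p ≠ v := by
  have h2 : ({u, v} : Finset (Fin 9)) ⊆ t := by simp [Finset.insert_subset_iff, hu, hv]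
  have hne : (t \ {u, v}).Nonempty := by
    rw [← Finset.card_pos, Finset.card_sdiff_of_subset h2, hsize t ht,
      Finset.card_insert_of_notMem (by simp [huv]), Finset.card_singleton]
    omega
  obtain ⟨p, hp⟩ := hne
  simp only [Finset.mem_sdiff, Finset.mem_insert, Finset.mem_singleton] at hp
  exact ⟨p, hp.1, fun h => hp.2 (Or.inl h), fun h => hp.2 (Or.inr h)⟩

lemma no_three (hsize : ∀ t ∈ T, t.card = 3)
    (hpair : ∀ u v : Fin 9, u ≠ v → ∃! t, t ∈ T ∧ u ∈ t ∧ v ∈ t)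
    (hres : ∀ (i : Fin 4) (v : Fin 9), ∃! t, t ∈ T ∧ par t = i ∧ v ∈ t)
    (hc : ∀ (u v : Fin 9) (t : Finset (Fin 9)),
      u ≠ v → t ∈ T → u ∈ t → v ∈ t → c s(u, v) = par t)
    {a b d e : Fin 9} (hab : a ≠ b) (had : a ≠ d) (hae : a ≠ e)
    (hbd : b ≠ d) (hbe : b ≠ e) (hde : d ≠ e)
    (h1 : c s(a,b) = c s(d,e)) (h2 : c s(a,d) = c s(b,e)) (h3 : c s(a,e) = c s(b,d))
    (n1 : c s(a,b) ≠ c s(a,d)) (n2 : c s(a,b) ≠ c s(a,e)) (n3 : c s(a,d) ≠ c s(a,e)) :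
    False := by
  obtain ⟨t1, ht1, ha1, hb1, hg1⟩ := tri hpair hc hab
  obtain ⟨t2, ht2, hd2, he2, hg2⟩ := tri hpair hc hde
  obtain ⟨t3, ht3, ha3, hd3, hg3⟩ := tri hpair hc had
  obtain ⟨t4, ht4, hb4, he4, hg4⟩ := tri hpair hc hbe
  obtain ⟨t5, ht5, ha5, he5, hg5⟩ := tri hpair hc hae
  obtain ⟨t6, ht6, hb6, hd6, hg6⟩ := tri hpair hc hbd
  -- exclusion facts
  have hd1 : d ∉ t1 := fun h => n1 ((hc a d t1 had ht1 ha1 h).trans hg1).symm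
  have he1 : e ∉ t1 := fun h => n2 ((hc a e t1 hae ht1 ha1 h).trans hg1).symm
  have ha2 : a ∉ t2 := fun h => n1 (h1.trans ((hc a d t2 had ht2 h hd2).trans hg2).symm)
  have hb2 : b ∉ t2 := fun h =>
    n2 (h1.trans (((hc b d t2 hbd ht2 h hd2).trans hg2).symm.trans h3.symm))
  have hb3 : b ∉ t3 := fun h => n1 ((hc a b t3 hab ht3 ha3 h).trans hg3)
  have he3 : e ∉ t3 := fun h => n3 ((hc a e t3 hae ht3 ha3 h).trans hg3).symm
  have ha4 : a ∉ t4 := fun h => n1 (((hc a b t4 hab ht4 h hb4).trans hg4).trans h2.symm)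
  have hd4 : d ∉ t4 := fun h =>
    n3 ((h3.trans (((hc b d t4 hbd ht4 hb4 h).trans hg4).trans h2.symm)).symm)
  have hb5 : b ∉ t5 := fun h => n2 ((hc a b t5 hab ht5 ha5 h).trans hg5)
  have hd5 : d ∉ t5 := fun h => n3 ((hc a d t5 had ht5 ha5 h).trans hg5)
  have ha6 : a ∉ t6 := fun h => n2 (((hc a b t6 hab ht6 h hb6).trans hg6).trans h3.symm)
  have he6 : e ∉ t6 := fun h =>
    n2 (h1.trans (((hc d e t6 hde ht6 hd6 h).trans hg6).trans h3.symm))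
  -- third points
  obtain ⟨p1, hq1, hp1a, hp1b⟩ := third_point hsize ht1 ha1 hb1 hab
  obtain ⟨p2, hq2, hp2d, hp2e⟩ := third_point hsize ht2 hd2 he2 hde
  obtain ⟨p3, hq3, hp3a, hp3d⟩ := third_point hsize ht3 ha3 hd3 had
  obtain ⟨p4, hq4, hp4b, hp4e⟩ := third_point hsize ht4 hb4 he4 hbe
  obtain ⟨p5, hq5, hp5a, hp5e⟩ := third_point hsize ht5 ha5 he5 hae
  obtain ⟨p6, hq6, hp6b, hp6d⟩ := third_point hsize ht6 hb6 hd6 hbd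
  have hp1d : p1 ≠ d := fun h => hd1 (h ▸ hq1)
  have hp1e : p1 ≠ e := fun h => he1 (h ▸ hq1)
  have hp2a : p2 ≠ a := fun h => ha2 (h ▸ hq2)
  have hp2b : p2 ≠ b := fun h => hb2 (h ▸ hq2)
  have hp3b : p3 ≠ b := fun h => hb3 (h ▸ hq3)
  have hp3e : p3 ≠ e := fun h => he3 (h ▸ hq3)
  have hp4a : p4 ≠ a := fun h => ha4 (h ▸ hq4)
  have hp4d : p4 ≠ d := fun h => hd4 (h ▸ hq4)
  have hp5b : p5 ≠ b := fun h => hb5 (h ▸ hq5)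
  have hp5d : p5 ≠ d := fun h => hd5 (h ▸ hq5)
  have hp6a : p6 ≠ a := fun h => ha6 (h ▸ hq6)
  have hp6e : p6 ≠ e := fun h => he6 (h ▸ hq6)
  -- pairwise distinctness of the outside points
  have p12 : p1 ≠ p2 := by
    intro h; subst h
    exact ha2 ((class_eq hres ht1 ht2 (hg1.trans (h1.trans hg2.symm)) hq1 hq2) ▸ ha1)
  have p13 : p1 ≠ p3 := by
    intro h; subst h
    have he := pair_eq hpair hp1a.symm ht1 ht3 ha1 hq1 ha3 hq3
    exact n1 (hg1.symm.trans ((congrArg par he).trans hg3))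
  have p14 : p1 ≠ p4 := by
    intro h; subst h
    have he := pair_eq hpair hp1b.symm ht1 ht4 hb1 hq1 hb4 hq4
    exact n1 (hg1.symm.trans (((congrArg par he).trans hg4).trans h2.symm))
  have p15 : p1 ≠ p5 := by
    intro h; subst h
    have he := pair_eq hpair hp1a.symm ht1 ht5 ha1 hq1 ha5 hq5
    exact n2 (hg1.symm.trans ((congrArg par he).trans hg5))
  have p16 : p1 ≠ p6 := by
    intro h; subst h
    have he := pair_eq hpair hp1b.symm ht1 ht6 hb1 hq1 hb6 hq6
    exact n2 (hg1.symm.trans (((congrArg par he).trans hg6).trans h3.symm))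
  have p23 : p2 ≠ p3 := by
    intro h; subst h
    have he := pair_eq hpair hp2d.symm ht2 ht3 hd2 hq2 hd3 hq3
    exact n1 (h1.trans (hg2.symm.trans ((congrArg par he).trans hg3)))
  have p24 : p2 ≠ p4 := by
    intro h; subst h
    have he := pair_eq hpair hp2e.symm ht2 ht4 he2 hq2 he4 hq4
    exact n1 (h1.trans (hg2.symm.trans (((congrArg par he).trans hg4).trans h2.symm)))
  have p25 : p2 ≠ p5 := by
    intro h; subst h
    have he := pair_eq hpair hp2e.symm ht2 ht5 he2 hq2 he5 hq5
    exact n2 (h1.trans (hg2.symm.trans ((congrArg par he).trans hg5)))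
  have p26 : p2 ≠ p6 := by
    intro h; subst h
    have he := pair_eq hpair hp2d.symm ht2 ht6 hd2 hq2 hd6 hq6
    exact n2 (h1.trans (hg2.symm.trans (((congrArg par he).trans hg6).trans h3.symm)))
  have p34 : p3 ≠ p4 := by
    intro h; subst h
    have he := class_eq hres ht3 ht4 (hg3.trans (h2.trans hg4.symm)) hq3 hq4
    exact hb3 (by rw [he]; exact hb4)
  have p35 : p3 ≠ p5 := by
    intro h; subst h
    have he := pair_eq hpair hp3a.symm ht3 ht5 ha3 hq3 ha5 hq5
    exact n3 (hg3.symm.trans ((congrArg par he).trans hg5))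
  have p36 : p3 ≠ p6 := by
    intro h; subst h
    have he := pair_eq hpair hp3d.symm ht3 ht6 hd3 hq3 hd6 hq6
    exact n3 (hg3.symm.trans (((congrArg par he).trans hg6).trans h3.symm))
  have p45 : p4 ≠ p5 := by
    intro h; subst h
    have he := pair_eq hpair hp4e.symm ht4 ht5 he4 hq4 he5 hq5
    exact n3 (h2.trans (hg4.symm.trans ((congrArg par he).trans hg5)))
  have p46 : p4 ≠ p6 := by
    intro h; subst h
    have he := pair_eq hpair hp4b.symm ht4 ht6 hb4 hq4 hb6 hq6
    exact n3 (h2.trans (hg4.symm.trans (((congrArg par he).trans hg6).trans h3.symm)))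
  have p56 : p5 ≠ p6 := by
    intro h; subst h
    have he := class_eq hres ht5 ht6 (hg5.trans (h3.trans hg6.symm)) hq5 hq6
    exact hb5 (by rw [he]; exact hb6)
  -- pigeonhole
  have hS : ({p1, p2, p3, p4, p5, p6} : Finset (Fin 9)).card = 6 := by
    rw [Finset.card_insert_of_notMem (by simp [p12, p13, p14, p15, p16]),
      Finset.card_insert_of_notMem (by simp [p23, p24, p25, p26]),
      Finset.card_insert_of_notMem (by simp [p34, p35, p36]),
      Finset.card_insert_of_notMem (by simp [p45, p46]),
      Finset.card_insert_of_notMem (by simp [p56]), Finset.card_singleton]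
  have hsub : ({p1, p2, p3, p4, p5, p6} : Finset (Fin 9)) ⊆ ({a, b, d, e} : Finset (Fin 9))ᶜ := by
    intro x hx
    simp only [Finset.mem_insert, Finset.mem_singleton] at hx
    rcases hx with rfl | rfl | rfl | rfl | rfl | rfl <;>
      simp [Finset.mem_compl, hp1a, hp1b, hp1d, hp1e, hp2a, hp2b, hp2d, hp2e,
        hp3a, hp3b, hp3d, hp3e, hp4a, hp4b, hp4d, hp4e, hp5a, hp5b, hp5d, hp5e,
        hp6a, hp6b, hp6d, hp6e]
  have hc4 : ({a, b, d, e} : Finset (Fin 9)).card = 4 := by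
    rw [Finset.card_insert_of_notMem (by simp [hab, had, hae]),
      Finset.card_insert_of_notMem (by simp [hbd, hbe]),
      Finset.card_insert_of_notMem (by simp [hde]), Finset.card_singleton]
  have hcompl : (({a, b, d, e} : Finset (Fin 9))ᶜ).card = 5 := by
    rw [Finset.card_compl, hc4]; rfl
  have := Finset.card_le_card hsub
  rw [hS, hcompl] at this
  omega


variable {T : Finset (Finset (Fin 9))} {par : Finset (Fin 9) → Fin 4} {c : Sym2 (Fin 9) → Fin 4}

lemma quad_false (hsize : ∀ t ∈ T, t.card = 3)
    (hpair : ∀ u v : Fin 9, u ≠ v → ∃! t, t ∈ T ∧ u ∈ t ∧ v ∈ t)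
    {u v w x : Fin 9} (huv : u ≠ v) (huw : u ≠ w) (hux : u ≠ x)
    (hvw : v ≠ w) (hvx : v ≠ x) (hwx : w ≠ x)
    (h1 : ∃ t ∈ T, u ∈ t ∧ v ∈ t ∧ w ∈ t)
    (h2 : ∃ t ∈ T, u ∈ t ∧ v ∈ t ∧ x ∈ t) : False := by
  obtain ⟨t1, ht1, hu1, hv1, hw1⟩ := h1
  obtain ⟨t2, ht2, hu2, hv2, hx2⟩ := h2
  obtain ⟨t, -, ht⟩ := hpair u v huv
  have he : t1 = t2 := by rw [ht t1 ⟨ht1, hu1, hv1⟩, ht t2 ⟨ht2, hu2, hv2⟩]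
  have hx1 : x ∈ t1 := by rw [he]; exact hx2
  have hsub : ({u, v, w, x} : Finset (Fin 9)) ⊆ t1 := by
    simp [Finset.insert_subset_iff, hu1, hv1, hw1, hx1]
  have hcard : ({u, v, w, x} : Finset (Fin 9)).card = 4 := by
    rw [Finset.card_insert_of_notMem (by simp [huv, huw, hux]),
      Finset.card_insert_of_notMem (by simp [hvw, hvx]),
      Finset.card_insert_of_notMem (by simp [hwx]), Finset.card_singleton]
  have := Finset.card_le_card hsub
  rw [hsize t1 ht1, hcard] at this
  omega

lemma common (hpair : ∀ u v : Fin 9, u ≠ v → ∃! t, t ∈ T ∧ u ∈ t ∧ v ∈ t)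
    (hres : ∀ (i : Fin 4) (v : Fin 9), ∃! t, t ∈ T ∧ par t = i ∧ v ∈ t)
    (hc : ∀ (u v : Fin 9) (t : Finset (Fin 9)),
      u ≠ v → t ∈ T → u ∈ t → v ∈ t → c s(u, v) = par t)
    {u v w : Fin 9} (huv : u ≠ v) (huw : u ≠ w)
    (h : c s(u, v) = c s(u, w)) : ∃ t ∈ T, u ∈ t ∧ v ∈ t ∧ w ∈ t := by
  obtain ⟨t1, ⟨ht1, hu1, hv1⟩, -⟩ := hpair u v huv
  obtain ⟨t2, ⟨ht2, hu2, hw2⟩, -⟩ := hpair u w huw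
  have hp1 := hc u v t1 huv ht1 hu1 hv1
  have hp2 := hc u w t2 huw ht2 hu2 hw2
  obtain ⟨t, -, ht⟩ := hres (par t1) u
  have he : t1 = t2 := by
    rw [ht t1 ⟨ht1, rfl, hu1⟩, ht t2 ⟨ht2, by rw [← hp2, ← h, hp1], hu2⟩]
  exact ⟨t1, ht1, hu1, hv1, by rw [he]; exact hw2⟩

lemma rainbow_aux (hsize : ∀ t ∈ T, t.card = 3)
    (hpair : ∀ u v : Fin 9, u ≠ v → ∃! t, t ∈ T ∧ u ∈ t ∧ v ∈ t)
    (hres : ∀ (i : Fin 4) (v : Fin 9), ∃! t, t ∈ T ∧ par t = i ∧ v ∈ t)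
    (hc : ∀ (u v : Fin 9) (t : Finset (Fin 9)),
      u ≠ v → t ∈ T → u ∈ t → v ∈ t → c s(u, v) = par t)
    {a b d e : Fin 9} (hab : a ≠ b) (had : a ≠ d) (hae : a ≠ e)
    (hbd : b ≠ d) (hbe : b ≠ e) (hde : d ≠ e)
    (hne : c s(a, b) ≠ c s(d, e)) :
    ∃ x y z w : Fin 9, x ≠ y ∧ x ≠ z ∧ x ≠ w ∧ y ≠ z ∧ y ≠ w ∧ z ≠ w ∧
      ({x, y, z, w} : Finset (Fin 9)) = {a, b, d, e} ∧
      c s(x, y) ≠ c s(y, z) ∧ c s(y, z) ≠ c s(z, w) ∧ c s(x, y) ≠ c s(z, w) := by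
  by_cases H1 : c s(a, d) = c s(a, b)
  · -- triple containing a, b, d
    have t0 : ∃ t ∈ T, a ∈ t ∧ b ∈ t ∧ d ∈ t := common hpair hres hc hab had H1.symm
    by_cases H2 : c s(a, e) = c s(a, b)
    · exact absurd (common hpair hres hc hab hae H2.symm)
        (fun t1 => quad_false hsize hpair hab had hae hbd hbe hde t0 t1)
    · by_cases H3 : c s(a, e) = c s(d, e)
      · -- triple containing e, a, d → contradiction with t0
        have t1 : ∃ t ∈ T, e ∈ t ∧ a ∈ t ∧ d ∈ t :=
          common hpair hres hc hae.symm hde.symm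
            (((congrArg c Sym2.eq_swap).trans H3).trans (congrArg c Sym2.eq_swap))
        obtain ⟨s0, hs0, ha0, hb0, hd0⟩ := t0
        obtain ⟨s1, hs1, he1, ha1, hd1⟩ := t1
        exact (quad_false hsize hpair had hab hae hbd.symm hde hbe
          ⟨s0, hs0, ha0, hd0, hb0⟩ ⟨s1, hs1, ha1, hd1, he1⟩).elim
      · -- rainbow path b - a - e - d
        refine ⟨b, a, e, d, hab.symm, hbe, hbd, hae, had, hde.symm, by ext x; simp; tauto,
          ?_, ?_, ?_⟩
        · rw [show s(b, a) = s(a, b) from Sym2.eq_swap]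
          exact fun h => H2 h.symm
        · rw [show s(e, d) = s(d, e) from Sym2.eq_swap]
          exact H3
        · rw [show s(b, a) = s(a, b) from Sym2.eq_swap,
            show s(e, d) = s(d, e) from Sym2.eq_swap]
          exact hne
  · by_cases H1' : c s(a, d) = c s(d, e)
    · -- triple containing d, a, e
      have t0 : ∃ t ∈ T, d ∈ t ∧ a ∈ t ∧ e ∈ t :=
        common hpair hres hc had.symm hde ((congrArg c Sym2.eq_swap).trans H1')
      by_cases HB1 : c s(b, e) = c s(a, b)
      · -- triple containing b, a, e → contradiction
        have t1 : ∃ t ∈ T, b ∈ t ∧ a ∈ t ∧ e ∈ t :=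
          common hpair hres hc hab.symm hbe ((congrArg c Sym2.eq_swap).trans HB1.symm)
        obtain ⟨s0, hs0, hd0, ha0, he0⟩ := t0
        obtain ⟨s1, hs1, hb1, ha1, he1⟩ := t1
        exact (quad_false hsize hpair hae had hab hde.symm hbe.symm hbd.symm
          ⟨s0, hs0, ha0, he0, hd0⟩ ⟨s1, hs1, ha1, he1, hb1⟩).elim
      · by_cases HB2 : c s(b, e) = c s(d, e)
        · have t1 : ∃ t ∈ T, e ∈ t ∧ b ∈ t ∧ d ∈ t :=
            common hpair hres hc hbe.symm hde.symm
              (((congrArg c Sym2.eq_swap).trans HB2).trans (congrArg c Sym2.eq_swap))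
          obtain ⟨s0, hs0, hd0, ha0, he0⟩ := t0
          obtain ⟨s1, hs1, he1, hb1, hd1⟩ := t1
          exact (quad_false hsize hpair hde had.symm hbd.symm hae.symm hbe.symm hab
            ⟨s0, hs0, hd0, he0, ha0⟩ ⟨s1, hs1, hd1, he1, hb1⟩).elim
        · -- rainbow path a - b - e - d
          refine ⟨a, b, e, d, hab, hae, had, hbe, hbd, hde.symm, by ext x; simp; tauto,
            ?_, ?_, ?_⟩
          · exact fun h => HB1 h.symm
          · rw [show s(e, d) = s(d, e) from Sym2.eq_swap]
            exact HB2
          · rw [show s(e, d) = s(d, e) from Sym2.eq_swap]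
            exact hne
    · -- rainbow path b - a - d - e
      refine ⟨b, a, d, e, hab.symm, hbd, hbe, had, hae, hde, by ext x; simp; tauto,
        ?_, ?_, ?_⟩
      · rw [show s(b, a) = s(a, b) from Sym2.eq_swap]
        exact fun h => H1 h.symm
      · exact H1'
      · rw [show s(b, a) = s(a, b) from Sym2.eq_swap]
        exact hne


end Stmt7Aux

open Stmt7Aux in
/-- In the edge-coloring of `K_9` induced by the parallel classes of any Kirkman triple
system on 9 points (4 parallel classes), no 4-set of vertices induces a `K_4` whose
edge set is split by the coloring into three perfect matchings; hence every 4-set of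
vertices contains a rainbow `P_4`. -/
theorem stmt_7 (T : Finset (Finset (Fin 9)))
    (hsize : ∀ t ∈ T, t.card = 3)
    (hpair : ∀ u v : Fin 9, u ≠ v → ∃! t, t ∈ T ∧ u ∈ t ∧ v ∈ t)
    (par : Finset (Fin 9) → Fin 4)
    (hres : ∀ (i : Fin 4) (v : Fin 9), ∃! t, t ∈ T ∧ par t = i ∧ v ∈ t)
    (c : Sym2 (Fin 9) → Fin 4)
    (hc : ∀ (u v : Fin 9) (t : Finset (Fin 9)),
      u ≠ v → t ∈ T → u ∈ t → v ∈ t → c s(u, v) = par t) :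
    ∀ a b d e : Fin 9, a ≠ b → a ≠ d → a ≠ e → b ≠ d → b ≠ e → d ≠ e →
      (¬ (c s(a, b) = c s(d, e) ∧ c s(a, d) = c s(b, e) ∧ c s(a, e) = c s(b, d) ∧
        c s(a, b) ≠ c s(a, d) ∧ c s(a, b) ≠ c s(a, e) ∧ c s(a, d) ≠ c s(a, e))) ∧
      ∃ x y z w : Fin 9, x ≠ y ∧ x ≠ z ∧ x ≠ w ∧ y ≠ z ∧ y ≠ w ∧ z ≠ w ∧
        ({x, y, z, w} : Finset (Fin 9)) = {a, b, d, e} ∧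
        c s(x, y) ≠ c s(y, z) ∧ c s(y, z) ≠ c s(z, w) ∧ c s(x, y) ≠ c s(z, w) := by
  intro a b d e hab had hae hbd hbe hde
  constructor
  · rintro ⟨m1, m2, m3, n1, n2, n3⟩
    exact no_three hsize hpair hres hc hab had hae hbd hbe hde m1 m2 m3 n1 n2 n3
  · by_cases M1 : c s(a, b) = c s(d, e)
    · by_cases M2 : c s(a, d) = c s(b, e)
      · by_cases M3 : c s(a, e) = c s(b, d)
        · exfalso
          have n1 : c s(a, b) ≠ c s(a, d) := by
            intro h
            obtain ⟨t0, ht0, ha0, hb0, hd0⟩ := common hpair hres hc hab had h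
            have e1 : c s(a, e) = c s(a, b) := by
              rw [M3, hc b d t0 hbd ht0 hb0 hd0, ← hc a b t0 hab ht0 ha0 hb0]
            exact quad_false hsize hpair hab had hae hbd hbe hde
              ⟨t0, ht0, ha0, hb0, hd0⟩ (common hpair hres hc hab hae e1.symm)
          have n2 : c s(a, b) ≠ c s(a, e) := by
            intro h
            obtain ⟨t0, ht0, ha0, hb0, he0⟩ := common hpair hres hc hab hae h
            have e1 : c s(a, d) = c s(a, b) := by
              rw [M2, hc b e t0 hbe ht0 hb0 he0, ← hc a b t0 hab ht0 ha0 hb0]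
            exact quad_false hsize hpair hab hae had hbe hbd hde.symm
              ⟨t0, ht0, ha0, hb0, he0⟩ (common hpair hres hc hab had e1.symm)
          have n3 : c s(a, d) ≠ c s(a, e) := by
            intro h
            obtain ⟨t0, ht0, ha0, hd0, he0⟩ := common hpair hres hc had hae h
            have e1 : c s(a, b) = c s(a, d) := by
              rw [M1, hc d e t0 hde ht0 hd0 he0, ← hc a d t0 had ht0 ha0 hd0]
            obtain ⟨t1, ht1, ha1, hb1, hd1⟩ := common hpair hres hc hab had e1
            exact quad_false hsize hpair had hae hab hde hbd.symm hbe.symm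
              ⟨t0, ht0, ha0, hd0, he0⟩ ⟨t1, ht1, ha1, hd1, hb1⟩
          exact no_three hsize hpair hres hc hab had hae hbd hbe hde M1 M2 M3 n1 n2 n3
        · obtain ⟨x, y, z, w, h1, h2, h3, h4, h5, h6, hset, r1, r2, r3⟩ :=
            rainbow_aux hsize hpair hres hc hae hab had hbe.symm hde.symm hbd M3
          exact ⟨x, y, z, w, h1, h2, h3, h4, h5, h6,
            hset.trans (by ext u; simp; tauto), r1, r2, r3⟩
      · obtain ⟨x, y, z, w, h1, h2, h3, h4, h5, h6, hset, r1, r2, r3⟩ :=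
          rainbow_aux hsize hpair hres hc had hab hae hbd.symm hde hbe M2
        exact ⟨x, y, z, w, h1, h2, h3, h4, h5, h6,
          hset.trans (by ext u; simp; tauto), r1, r2, r3⟩
    · exact rainbow_aux hsize hpair hres hc hab had hae hbd hbe hde M1
end

section
/- Let n = 3^t. Given a Kirkman triple system on 3^{t-1} points whose induced edge-coloring leaves no K_4 colored with only 3 colors ('good KTS'), the following construction yields a good KTS on 3^t points: take three disjoint copies A_0, A_1, A_2 of the point set, use the union of the i-th parallel classes of the three copies as new parallel classes, and for each j in {0,...,3^{t-1}-1} add the parallel class consisting of all triples {(0,a), (1, a+j mod 3^{t-1}), (2, a+2j mod 3^{t-1})}. -/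
set_option linter.unusedSectionVars false
set_option maxHeartbeats 1000000

/-- The triples (with their parallel-class index) of the tripled Kirkman system:
three copies of the old system on the classes `{0,1,2} × Fin N`, whose `i`-th parallel
classes are merged (index `Sum.inl i`), together with, for each `j : Fin N`, the new
parallel class (index `Sum.inr j`) of all triples `{(0,a), (1,a+j), (2,a+2j)}`
(arithmetic mod `N`). -/
def tripledKTS (N : ℕ) [NeZero N] (T : Finset (Finset (Fin N)))
    (par : Finset (Fin N) → Fin ((N - 1) / 2)) :
    Set (Finset (Fin 3 × Fin N) × (Fin ((N - 1) / 2) ⊕ Fin N)) :=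
  {e | (∃ (ℓ : Fin 3) (t : Finset (Fin N)), t ∈ T ∧
          e = (t.image (fun x => (ℓ, x)), Sum.inl (par t))) ∨
       (∃ j a : Fin N,
          e = ({(0, a), (1, a + j), (2, a + j + j)}, Sum.inr j))}

/-- A parallel class index `i` appears on an edge inside a 4-set `{a,b,d,e}` of a
system of triples-with-class-indices `S`. -/
def classOnQuad {P C : Type*} (S : Set (Finset P × C)) (a b d e : P) (i : C) : Prop :=
  ∃ u v : P, u ∈ ({a, b, d, e} : Set P) ∧ v ∈ ({a, b, d, e} : Set P) ∧ u ≠ v ∧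
    ∃ s, (s, i) ∈ S ∧ u ∈ s ∧ v ∈ s

open Fin.NatCast Fin.CommRing

section Helpers

variable {N : ℕ} [NeZero N]

lemma two_inj (hodd : Odd N) {x y : Fin N} (h : x + x = y + y) : x = y := by
  have h2 : (2 * x.val) % N = (2 * y.val) % N := by
    have := congrArg Fin.val h
    simpa [Fin.add_def, two_mul, Nat.add_mod] using this
  have hco : Nat.Coprime 2 N := hodd.coprime_two_left
  have h3 : x.val ≡ y.val [MOD N] :=
    Nat.ModEq.cancel_left_of_coprime (by simpa [Nat.Coprime] using hco) h2
  exact Fin.ext (by simpa [Nat.ModEq, Nat.mod_eq_of_lt x.isLt, Nat.mod_eq_of_lt y.isLt] using h3)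

lemma half_exists (hodd : Odd N) (c : Fin N) : ∃ j : Fin N, j + j = c :=
  Finite.surjective_of_injective (f := fun x : Fin N => x + x)
    (fun _ _ h => two_inj hodd h) c

/-- The weight of a level: `0, 1, 2` as an element of `Fin N`. -/
def w (N : ℕ) [NeZero N] (ℓ : Fin 3) : Fin N := (ℓ.val : Fin N)

lemma cancel_w (hodd : Odd N) {ℓ1 ℓ2 : Fin 3} (h : ℓ1 ≠ ℓ2) {u v : Fin N}
    (hw : (w N ℓ2 - w N ℓ1) * u = (w N ℓ2 - w N ℓ1) * v) : u = v := by
  fin_cases ℓ1 <;> fin_cases ℓ2 <;>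
    simp only [w, Fin.isValue, Nat.cast_zero, Nat.cast_one, Nat.cast_ofNat] at hw h
  · exact absurd rfl h
  · linear_combination hw
  · exact two_inj hodd (by linear_combination hw)
  · linear_combination -hw
  · exact absurd rfl h
  · linear_combination hw
  · exact two_inj hodd (by linear_combination -hw)
  · linear_combination -hw
  · exact absurd rfl h

lemma solve_w (hodd : Odd N) {ℓ1 ℓ2 : Fin 3} (h : ℓ1 ≠ ℓ2) (c : Fin N) :
    ∃ j : Fin N, (w N ℓ2 - w N ℓ1) * j = c := by
  obtain ⟨j0, hj0⟩ := half_exists hodd c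
  fin_cases ℓ1 <;> fin_cases ℓ2 <;>
    simp only [w, Fin.isValue, Nat.cast_zero, Nat.cast_one, Nat.cast_ofNat] at h ⊢
  · exact absurd rfl h
  · exact ⟨c, by ring⟩
  · exact ⟨j0, by linear_combination hj0⟩
  · exact ⟨-c, by ring⟩
  · exact absurd rfl h
  · exact ⟨c, by ring⟩
  · exact ⟨-j0, by linear_combination hj0⟩
  · exact ⟨-c, by ring⟩
  · exact absurd rfl h

/-- The new triples. -/
def newT (N : ℕ) [NeZero N] (j a : Fin N) : Finset (Fin 3 × Fin N) :=
  {(0, a), (1, a + j), (2, a + j + j)}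

lemma mem_newT_w {ℓ : Fin 3} {x j a : Fin N} :
    (ℓ, x) ∈ newT N j a ↔ x = a + w N ℓ * j := by
  fin_cases ℓ <;>
    simp [newT, w, Prod.ext_iff, two_mul, add_assoc,
      show (0:Fin 3) ≠ 1 by decide, show (0:Fin 3) ≠ 2 by decide,
      show (1:Fin 3) ≠ 0 by decide, show (1:Fin 3) ≠ 2 by decide,
      show (2:Fin 3) ≠ 0 by decide, show (2:Fin 3) ≠ 1 by decide]

/-- `j` is the class of a new triple covering `(ℓ1,x)` and `(ℓ2,y)`. -/
def covers (N : ℕ) [NeZero N] (j : Fin N) (ℓ1 : Fin 3) (x : Fin N) (ℓ2 : Fin 3)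
    (y : Fin N) : Prop :=
  ∃ a, (ℓ1, x) ∈ newT N j a ∧ (ℓ2, y) ∈ newT N j a

lemma covers_iff {j : Fin N} {ℓ1 ℓ2 : Fin 3} {x y : Fin N} :
    covers N j ℓ1 x ℓ2 y ↔ y - x = (w N ℓ2 - w N ℓ1) * j := by
  constructor
  · rintro ⟨a, h1, h2⟩
    rw [mem_newT_w] at h1 h2
    subst h1; subst h2; ring
  · intro h
    exact ⟨x - w N ℓ1 * j, mem_newT_w.mpr (by ring),
      mem_newT_w.mpr (by linear_combination h)⟩

lemma covers_exists (hodd : Odd N) {ℓ1 ℓ2 : Fin 3} (h : ℓ1 ≠ ℓ2) (x y : Fin N) :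
    ∃ j, covers N j ℓ1 x ℓ2 y := by
  obtain ⟨j, hj⟩ := solve_w hodd h (y - x)
  exact ⟨j, covers_iff.mpr hj.symm⟩

lemma mem_imageCopy {t : Finset (Fin N)} {ℓ ℓ0 : Fin 3} {x : Fin N} :
    (ℓ0, x) ∈ t.image (fun z => (ℓ, z)) ↔ ℓ = ℓ0 ∧ x ∈ t := by
  simp only [Finset.mem_image, Prod.mk.injEq]
  constructor
  · rintro ⟨z, hz, h1, h2⟩; exact ⟨h1, h2 ▸ hz⟩
  · rintro ⟨rfl, hx⟩; exact ⟨x, hx, rfl, rfl⟩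

/-- `onQ S Q i`: class `i` appears on an edge inside `Q`. -/
def onQ {P C : Type*} (S : Set (Finset P × C)) (Q : Set P) (i : C) : Prop :=
  ∃ u v : P, u ∈ Q ∧ v ∈ Q ∧ u ≠ v ∧ ∃ s, (s, i) ∈ S ∧ u ∈ s ∧ v ∈ s

/-- `Goal S Q`: at least 4 distinct classes appear on edges inside `Q`. -/
def Goal {P C : Type*} (S : Set (Finset P × C)) (Q : Set P) : Prop :=
  ∃ i1 i2 i3 i4 : C, i1 ≠ i2 ∧ i1 ≠ i3 ∧ i1 ≠ i4 ∧ i2 ≠ i3 ∧ i2 ≠ i4 ∧ i3 ≠ i4 ∧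
    onQ S Q i1 ∧ onQ S Q i2 ∧ onQ S Q i3 ∧ onQ S Q i4

lemma ne_lr {α β : Type*} (a : α) (b : β) : (Sum.inl a : α ⊕ β) ≠ Sum.inr b :=
  fun h => Sum.inl_ne_inr h

lemma ne_rr {α β : Type*} {b b' : β} (h : b ≠ b') : (Sum.inr b : α ⊕ β) ≠ Sum.inr b' :=
  fun hh => h (Sum.inr.inj hh)

lemma ne_ll {α β : Type*} {a a' : α} (h : a ≠ a') : (Sum.inl a : α ⊕ β) ≠ Sum.inl a' :=
  fun hh => h (Sum.inl.inj hh)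

variable {T : Finset (Finset (Fin N))} {par : Finset (Fin N) → Fin ((N - 1) / 2)}

lemma onQ_same {Q : Set (Fin 3 × Fin N)} {ℓ : Fin 3} {x y : Fin N} (hxy : x ≠ y)
    (hx : (ℓ, x) ∈ Q) (hy : (ℓ, y) ∈ Q) {t : Finset (Fin N)} (ht : t ∈ T)
    (hxt : x ∈ t) (hyt : y ∈ t) : onQ (tripledKTS N T par) Q (Sum.inl (par t)) :=
  ⟨(ℓ, x), (ℓ, y), hx, hy, fun h => hxy (congrArg Prod.snd h),
    t.image (fun z => (ℓ, z)), Or.inl ⟨ℓ, t, ht, rfl⟩,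
    Finset.mem_image_of_mem _ hxt, Finset.mem_image_of_mem _ hyt⟩

lemma onQ_cross {Q : Set (Fin 3 × Fin N)} {ℓ1 ℓ2 : Fin 3} {x y j : Fin N}
    (hl : ℓ1 ≠ ℓ2) (hx : (ℓ1, x) ∈ Q) (hy : (ℓ2, y) ∈ Q) (hc : covers N j ℓ1 x ℓ2 y) :
    onQ (tripledKTS N T par) Q (Sum.inr j) := by
  obtain ⟨a, h1, h2⟩ := hc
  exact ⟨(ℓ1, x), (ℓ2, y), hx, hy, fun h => hl (congrArg Prod.fst h),
    newT N j a, Or.inr ⟨j, a, rfl⟩, h1, h2⟩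

lemma transfer {Q : Set (Fin 3 × Fin N)} {ℓ : Fin 3} {x1 x2 x3 x4 : Fin N}
    {i : Fin ((N - 1) / 2)}
    (m1 : (ℓ, x1) ∈ Q) (m2 : (ℓ, x2) ∈ Q) (m3 : (ℓ, x3) ∈ Q) (m4 : (ℓ, x4) ∈ Q)
    (h : classOnQuad {e | ∃ t ∈ T, e = (t, par t)} x1 x2 x3 x4 i) :
    onQ (tripledKTS N T par) Q (Sum.inl i) := by
  obtain ⟨u, v, hu, hv, huv, s, hs, hus, hvs⟩ := h
  obtain ⟨t, ht, heq⟩ := hs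
  obtain ⟨rfl, rfl⟩ : s = t ∧ i = par t := by
    simpa [Prod.ext_iff] using heq
  have hmQ : ∀ z, z ∈ ({x1, x2, x3, x4} : Set (Fin N)) → (ℓ, z) ∈ Q := by
    intro z hz
    simp only [Set.mem_insert_iff, Set.mem_singleton_iff] at hz
    rcases hz with rfl | rfl | rfl | rfl <;> assumption
  exact onQ_same huv (hmQ u hu) (hmQ v hv) ht hus hvs

lemma pat4 {Q : Set (Fin 3 × Fin N)} {ℓ : Fin 3} {x1 x2 x3 x4 : Fin N}
    (hg : ∃ i1 i2 i3 i4 : Fin ((N - 1) / 2), i1 ≠ i2 ∧ i1 ≠ i3 ∧ i1 ≠ i4 ∧ i2 ≠ i3 ∧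
      i2 ≠ i4 ∧ i3 ≠ i4 ∧
      classOnQuad {e | ∃ t ∈ T, e = (t, par t)} x1 x2 x3 x4 i1 ∧
      classOnQuad {e | ∃ t ∈ T, e = (t, par t)} x1 x2 x3 x4 i2 ∧
      classOnQuad {e | ∃ t ∈ T, e = (t, par t)} x1 x2 x3 x4 i3 ∧
      classOnQuad {e | ∃ t ∈ T, e = (t, par t)} x1 x2 x3 x4 i4)
    (m1 : (ℓ, x1) ∈ Q) (m2 : (ℓ, x2) ∈ Q) (m3 : (ℓ, x3) ∈ Q) (m4 : (ℓ, x4) ∈ Q) :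
    Goal (tripledKTS N T par) Q := by
  obtain ⟨i1, i2, i3, i4, e12, e13, e14, e23, e24, e34, c1, c2, c3, c4⟩ := hg
  exact ⟨Sum.inl i1, Sum.inl i2, Sum.inl i3, Sum.inl i4,
    ne_ll e12, ne_ll e13, ne_ll e14, ne_ll e23, ne_ll e24, ne_ll e34,
    transfer m1 m2 m3 m4 c1, transfer m1 m2 m3 m4 c2,
    transfer m1 m2 m3 m4 c3, transfer m1 m2 m3 m4 c4⟩

variable (hodd : Odd N)
variable (hpair : ∀ u v : Fin N, u ≠ v → ∃! t, t ∈ T ∧ u ∈ t ∧ v ∈ t)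

lemma fin3_pigeon {a b c d : Fin 3} (h1 : a ≠ b) (h2 : a ≠ c) (h3 : a ≠ d)
    (h4 : b ≠ c) (h5 : b ≠ d) (h6 : c ≠ d) : False := by
  have ha := a.isLt; have hb := b.isLt; have hc := c.isLt; have hd := d.isLt
  simp only [Ne, Fin.ext_iff] at h1 h2 h3 h4 h5 h6
  omega

include hodd hpair

lemma pat31 {Q : Set (Fin 3 × Fin N)} {ℓ ℓ' : Fin 3} {x1 x2 x3 y : Fin N}
    (hl : ℓ ≠ ℓ') (d12 : x1 ≠ x2) (d13 : x1 ≠ x3) (d23 : x2 ≠ x3)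
    (m1 : (ℓ, x1) ∈ Q) (m2 : (ℓ, x2) ∈ Q) (m3 : (ℓ, x3) ∈ Q) (my : (ℓ', y) ∈ Q) :
    Goal (tripledKTS N T par) Q := by
  obtain ⟨t, ⟨ht, h1t, h2t⟩, -⟩ := hpair x1 x2 d12
  obtain ⟨j1, hj1⟩ := covers_exists hodd hl x1 y
  obtain ⟨j2, hj2⟩ := covers_exists hodd hl x2 y
  obtain ⟨j3, hj3⟩ := covers_exists hodd hl x3 y
  have e1 := covers_iff.mp hj1
  have e2 := covers_iff.mp hj2
  have e3 := covers_iff.mp hj3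
  have n12 : j1 ≠ j2 := fun h => d12 (by rw [h] at e1; linear_combination e2 - e1)
  have n13 : j1 ≠ j3 := fun h => d13 (by rw [h] at e1; linear_combination e3 - e1)
  have n23 : j2 ≠ j3 := fun h => d23 (by rw [h] at e2; linear_combination e3 - e2)
  exact ⟨Sum.inl (par t), Sum.inr j1, Sum.inr j2, Sum.inr j3,
    ne_lr _ _, ne_lr _ _, ne_lr _ _, ne_rr n12, ne_rr n13, ne_rr n23,
    onQ_same d12 m1 m2 ht h1t h2t,
    onQ_cross hl m1 my hj1, onQ_cross hl m2 my hj2, onQ_cross hl m3 my hj3⟩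

lemma pat22 {Q : Set (Fin 3 × Fin N)} {ℓ1 ℓ2 : Fin 3} {x1 x2 y1 y2 : Fin N}
    (hl : ℓ1 ≠ ℓ2) (hx : x1 ≠ x2) (hy : y1 ≠ y2)
    (m1 : (ℓ1, x1) ∈ Q) (m2 : (ℓ1, x2) ∈ Q) (n1 : (ℓ2, y1) ∈ Q) (n2 : (ℓ2, y2) ∈ Q) :
    Goal (tripledKTS N T par) Q := by
  obtain ⟨t, ⟨ht, h1t, h2t⟩, -⟩ := hpair x1 x2 hx
  have c0 := onQ_same (T := T) (par := par) hx m1 m2 ht h1t h2t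
  obtain ⟨j11, hj11⟩ := covers_exists hodd hl x1 y1
  obtain ⟨j12, hj12⟩ := covers_exists hodd hl x1 y2
  obtain ⟨j21, hj21⟩ := covers_exists hodd hl x2 y1
  obtain ⟨j22, hj22⟩ := covers_exists hodd hl x2 y2
  have e11 := covers_iff.mp hj11
  have e12 := covers_iff.mp hj12
  have e21 := covers_iff.mp hj21
  have e22 := covers_iff.mp hj22
  have c11 := onQ_cross (T := T) (par := par) hl m1 n1 hj11
  have c12 := onQ_cross (T := T) (par := par) hl m1 n2 hj12
  have c21 := onQ_cross (T := T) (par := par) hl m2 n1 hj21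
  have c22 := onQ_cross (T := T) (par := par) hl m2 n2 hj22
  have n1112 : j11 ≠ j12 := fun h => hy (by rw [h] at e11; linear_combination e11 - e12)
  have n1121 : j11 ≠ j21 := fun h => hx (by rw [h] at e11; linear_combination e21 - e11)
  have n1222 : j12 ≠ j22 := fun h => hx (by rw [h] at e12; linear_combination e22 - e12)
  by_cases h0 : j11 = j22
  · have hsw : j12 ≠ j21 := by
      intro h
      rw [h0] at e11; rw [h] at e12
      exact hx (two_inj hodd (by linear_combination -e11 + e22 - e12 + e21))
    exact ⟨Sum.inl (par t), Sum.inr j11, Sum.inr j12, Sum.inr j21,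
      ne_lr _ _, ne_lr _ _, ne_lr _ _, ne_rr n1112, ne_rr n1121, ne_rr hsw,
      c0, c11, c12, c21⟩
  · exact ⟨Sum.inl (par t), Sum.inr j11, Sum.inr j12, Sum.inr j22,
      ne_lr _ _, ne_lr _ _, ne_lr _ _, ne_rr n1112, ne_rr h0, ne_rr n1222,
      c0, c11, c12, c22⟩

lemma pat211 {Q : Set (Fin 3 × Fin N)} {ℓ0 ℓ1 ℓ2 : Fin 3} {x1 x2 y z : Fin N}
    (h01 : ℓ0 ≠ ℓ1) (h02 : ℓ0 ≠ ℓ2) (h12 : ℓ1 ≠ ℓ2) (hx : x1 ≠ x2)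
    (m1 : (ℓ0, x1) ∈ Q) (m2 : (ℓ0, x2) ∈ Q) (my : (ℓ1, y) ∈ Q) (mz : (ℓ2, z) ∈ Q) :
    Goal (tripledKTS N T par) Q := by
  obtain ⟨t, ⟨ht, h1t, h2t⟩, -⟩ := hpair x1 x2 hx
  have c0 := onQ_same (T := T) (par := par) hx m1 m2 ht h1t h2t
  obtain ⟨f1, hf1⟩ := covers_exists hodd h01 x1 y
  obtain ⟨f2, hf2⟩ := covers_exists hodd h01 x2 y
  obtain ⟨g1, hg1⟩ := covers_exists hodd h02 x1 z
  obtain ⟨g2, hg2⟩ := covers_exists hodd h02 x2 z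
  obtain ⟨hc, hhc⟩ := covers_exists hodd h12 y z
  have ef1 := covers_iff.mp hf1
  have ef2 := covers_iff.mp hf2
  have eg1 := covers_iff.mp hg1
  have eg2 := covers_iff.mp hg2
  have eh := covers_iff.mp hhc
  have cf1 := onQ_cross (T := T) (par := par) h01 m1 my hf1
  have cf2 := onQ_cross (T := T) (par := par) h01 m2 my hf2
  have cg1 := onQ_cross (T := T) (par := par) h02 m1 mz hg1
  have cg2 := onQ_cross (T := T) (par := par) h02 m2 mz hg2
  have ch := onQ_cross (T := T) (par := par) h12 my mz hhc
  have df : f1 ≠ f2 := fun h => hx (by rw [h] at ef1; linear_combination ef2 - ef1)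
  have dg : g1 ≠ g2 := fun h => hx (by rw [h] at eg1; linear_combination eg2 - eg1)
  by_cases q1 : g1 = f1
  · by_cases q2 : g2 = f2
    · exfalso
      rw [q1] at eg1; rw [q2] at eg2
      have k1 : f1 = hc := cancel_w hodd h12 (by linear_combination ef1 - eg1 + eh)
      have k2 : f2 = hc := cancel_w hodd h12 (by linear_combination ef2 - eg2 + eh)
      exact df (k1.trans k2.symm)
    · have d1 : f1 ≠ g2 := fun h => dg (q1.trans h)
      have d2 : f2 ≠ g2 := fun h => q2 h.symm
      exact ⟨Sum.inl (par t), Sum.inr f1, Sum.inr f2, Sum.inr g2,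
        ne_lr _ _, ne_lr _ _, ne_lr _ _, ne_rr df, ne_rr d1, ne_rr d2,
        c0, cf1, cf2, cg2⟩
  · by_cases q2 : g1 = f2
    · by_cases q3 : g2 = f1
      · rw [q2] at eg1; rw [q3] at eg2
        have d1 : hc ≠ f1 := by
          intro h; rw [h] at eh
          exact hx (by linear_combination eg2 - eh - ef1)
        have d2 : hc ≠ f2 := by
          intro h; rw [h] at eh
          exact hx (by linear_combination eh + ef2 - eg1)
        exact ⟨Sum.inl (par t), Sum.inr f1, Sum.inr f2, Sum.inr hc,
          ne_lr _ _, ne_lr _ _, ne_lr _ _, ne_rr df,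
          ne_rr (fun h => d1 h.symm), ne_rr (fun h => d2 h.symm),
          c0, cf1, cf2, ch⟩
      · have d1 : f1 ≠ g2 := fun h => q3 h.symm
        have d2 : f2 ≠ g2 := fun h => dg (q2.trans h)
        exact ⟨Sum.inl (par t), Sum.inr f1, Sum.inr f2, Sum.inr g2,
          ne_lr _ _, ne_lr _ _, ne_lr _ _, ne_rr df, ne_rr d1, ne_rr d2,
          c0, cf1, cf2, cg2⟩
    · have d1 : f1 ≠ g1 := fun h => q1 h.symm
      have d2 : f2 ≠ g1 := fun h => q2 h.symm
      exact ⟨Sum.inl (par t), Sum.inr f1, Sum.inr f2, Sum.inr g1,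
        ne_lr _ _, ne_lr _ _, ne_lr _ _, ne_rr df, ne_rr d1, ne_rr d2,
        c0, cf1, cf2, cg1⟩

end Helpers

/-- Let `N = 3^{t-1}` (a power of 3). Given a good Kirkman triple system on `N` points
(a Steiner triple system `T` resolved into `(N-1)/2` parallel classes by `par`, such
that every 4-set of points meets at least 4 parallel classes on its edges), the tripled
construction `tripledKTS` is again a Kirkman triple system on `3N` points — every pair
of distinct points lies in exactly one triple, and each parallel class covers each
point exactly once — and it is again good: every 4-set of new points meets at least
4 parallel classes on its edges. -/
theorem stmt_8 (N : ℕ) [NeZero N] (hpow : ∃ s : ℕ, N = 3 ^ s)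
    (T : Finset (Finset (Fin N)))
    (hsize : ∀ t ∈ T, t.card = 3)
    (hpair : ∀ u v : Fin N, u ≠ v → ∃! t, t ∈ T ∧ u ∈ t ∧ v ∈ t)
    (par : Finset (Fin N) → Fin ((N - 1) / 2))
    (hres : ∀ (i : Fin ((N - 1) / 2)) (v : Fin N), ∃! t, t ∈ T ∧ par t = i ∧ v ∈ t)
    (hgood : ∀ a b d e : Fin N, a ≠ b → a ≠ d → a ≠ e → b ≠ d → b ≠ e → d ≠ e →
      ∃ i1 i2 i3 i4 : Fin ((N - 1) / 2), i1 ≠ i2 ∧ i1 ≠ i3 ∧ i1 ≠ i4 ∧ i2 ≠ i3 ∧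
        i2 ≠ i4 ∧ i3 ≠ i4 ∧
        classOnQuad {e | ∃ t ∈ T, e = (t, par t)} a b d e i1 ∧
        classOnQuad {e | ∃ t ∈ T, e = (t, par t)} a b d e i2 ∧
        classOnQuad {e | ∃ t ∈ T, e = (t, par t)} a b d e i3 ∧
        classOnQuad {e | ∃ t ∈ T, e = (t, par t)} a b d e i4) :
    (∀ u v : Fin 3 × Fin N, u ≠ v →
      ∃! e : Finset (Fin 3 × Fin N) × (Fin ((N - 1) / 2) ⊕ Fin N),
        e ∈ tripledKTS N T par ∧ u ∈ e.1 ∧ v ∈ e.1) ∧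
    (∀ (i : Fin ((N - 1) / 2) ⊕ Fin N) (v : Fin 3 × Fin N),
      ∃! s : Finset (Fin 3 × Fin N), (s, i) ∈ tripledKTS N T par ∧ v ∈ s) ∧
    (∀ a b d e : Fin 3 × Fin N, a ≠ b → a ≠ d → a ≠ e → b ≠ d → b ≠ e → d ≠ e →
      ∃ i1 i2 i3 i4 : Fin ((N - 1) / 2) ⊕ Fin N, i1 ≠ i2 ∧ i1 ≠ i3 ∧ i1 ≠ i4 ∧
        i2 ≠ i3 ∧ i2 ≠ i4 ∧ i3 ≠ i4 ∧
        classOnQuad (tripledKTS N T par) a b d e i1 ∧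
        classOnQuad (tripledKTS N T par) a b d e i2 ∧
        classOnQuad (tripledKTS N T par) a b d e i3 ∧
        classOnQuad (tripledKTS N T par) a b d e i4) := by
  have hodd : Odd N := by
    obtain ⟨s, rfl⟩ := hpow
    exact Odd.pow ⟨1, by norm_num⟩
  refine ⟨?_, ?_, ?_⟩
  · -- pair covering
    rintro ⟨l1, x⟩ ⟨l2, y⟩ huv
    by_cases hl : l1 = l2
    · subst hl
      have hxy : x ≠ y := fun h => huv (by rw [h])
      obtain ⟨t, ⟨ht, hxt, hyt⟩, huniq⟩ := hpair x y hxy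
      refine ⟨(t.image (fun z => (l1, z)), Sum.inl (par t)),
        ⟨Or.inl ⟨l1, t, ht, rfl⟩, Finset.mem_image_of_mem _ hxt,
          Finset.mem_image_of_mem _ hyt⟩, ?_⟩
      rintro ⟨s, c⟩ ⟨hmem, hxs, hys⟩
      rcases hmem with ⟨ℓ', t', ht', heq⟩ | ⟨j, a0, heq⟩
      · obtain ⟨rfl, rfl⟩ : s = t'.image (fun z => (ℓ', z)) ∧ c = Sum.inl (par t') := by
          simpa [Prod.ext_iff] using heq
        obtain ⟨rfl, hxt'⟩ := mem_imageCopy.mp hxs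
        obtain ⟨-, hyt'⟩ := mem_imageCopy.mp hys
        have htt : t' = t := huniq t' ⟨ht', hxt', hyt'⟩
        rw [htt]
      · exfalso
        obtain ⟨rfl, rfl⟩ : s = newT N j a0 ∧ c = Sum.inr j := by
          simpa [Prod.ext_iff, newT] using heq
        have hx' := mem_newT_w.mp hxs
        have hy' := mem_newT_w.mp hys
        exact hxy (hx'.trans hy'.symm)
    · obtain ⟨j, hj⟩ := solve_w hodd hl (y - x)
      refine ⟨(newT N j (x - w N l1 * j), Sum.inr j),
        ⟨Or.inr ⟨j, x - w N l1 * j, rfl⟩, mem_newT_w.mpr (by ring),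
          mem_newT_w.mpr (by linear_combination -hj)⟩, ?_⟩
      rintro ⟨s, c⟩ ⟨hmem, hxs, hys⟩
      rcases hmem with ⟨ℓ', t', ht', heq⟩ | ⟨j', a', heq⟩
      · exfalso
        obtain ⟨rfl, rfl⟩ : s = t'.image (fun z => (ℓ', z)) ∧ c = Sum.inl (par t') := by
          simpa [Prod.ext_iff] using heq
        obtain ⟨h1, -⟩ := mem_imageCopy.mp hxs
        obtain ⟨h2, -⟩ := mem_imageCopy.mp hys
        exact hl (h1.symm.trans h2)
      · obtain ⟨rfl, rfl⟩ : s = newT N j' a' ∧ c = Sum.inr j' := by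
          simpa [Prod.ext_iff, newT] using heq
        have hx' := mem_newT_w.mp hxs
        have hy' := mem_newT_w.mp hys
        have hjj : j' = j := cancel_w hodd hl (by linear_combination hx' - hy' - hj)
        subst hjj
        have ha : a' = x - w N l1 * j' := by linear_combination -hx'
        rw [ha]
  · -- resolvability
    rintro i ⟨ℓ, x⟩
    cases i with
    | inl i0 =>
      obtain ⟨t, ⟨ht, hpt, hxt⟩, huniq⟩ := hres i0 x
      refine ⟨t.image (fun z => (ℓ, z)),
        ⟨Or.inl ⟨ℓ, t, ht, by rw [hpt]⟩, Finset.mem_image_of_mem _ hxt⟩, ?_⟩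
      rintro s' ⟨hmem, hxs⟩
      rcases hmem with ⟨ℓ', t', ht', heq⟩ | ⟨j, a0, heq⟩
      · obtain ⟨rfl, hpc⟩ : s' = t'.image (fun z => (ℓ', z)) ∧
            (Sum.inl i0 : Fin ((N - 1) / 2) ⊕ Fin N) = Sum.inl (par t') := by
          simpa [Prod.ext_iff] using heq
        have hp' : par t' = i0 := (Sum.inl.inj hpc).symm
        obtain ⟨rfl, hxt'⟩ := mem_imageCopy.mp hxs
        have htt : t' = t := huniq t' ⟨ht', hp', hxt'⟩
        rw [htt]
      · exfalso
        have : (Sum.inl i0 : Fin ((N - 1) / 2) ⊕ Fin N) = Sum.inr j := by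
          simpa [Prod.ext_iff] using heq
        exact Sum.inl_ne_inr this
    | inr j =>
      refine ⟨newT N j (x - w N ℓ * j),
        ⟨Or.inr ⟨j, x - w N ℓ * j, rfl⟩, mem_newT_w.mpr (by ring)⟩, ?_⟩
      rintro s' ⟨hmem, hxs⟩
      rcases hmem with ⟨ℓ', t', ht', heq⟩ | ⟨j', a', heq⟩
      · exfalso
        have : (Sum.inr j : Fin ((N - 1) / 2) ⊕ Fin N) = Sum.inl (par t') := by
          simpa [Prod.ext_iff] using heq
        exact Sum.inr_ne_inl this
      · obtain ⟨rfl, hj'⟩ : s' = newT N j' a' ∧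
            (Sum.inr j : Fin ((N - 1) / 2) ⊕ Fin N) = Sum.inr j' := by
          simpa [Prod.ext_iff, newT] using heq
        have hjj : j' = j := (Sum.inr.inj hj').symm
        subst hjj
        have hx' := mem_newT_w.mp hxs
        have ha : a' = x - w N ℓ * j' := by linear_combination -hx'
        rw [ha]
  · -- goodness
    rintro ⟨la, xa⟩ ⟨lb, xb⟩ ⟨ld, xd⟩ ⟨le', xe⟩ hab had hae hbd hbe hde
    have key : ∀ {l l' : Fin 3} {x y : Fin N},
        ((l, x) : Fin 3 × Fin N) ≠ (l', y) → l = l' → x ≠ y :=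
      fun h hl hx => h (by rw [hl, hx])
    suffices hG : Goal (tripledKTS N T par)
        ({(la, xa), (lb, xb), (ld, xd), (le', xe)} : Set (Fin 3 × Fin N)) by
      exact hG
    by_cases h12 : la = lb
    · by_cases h13 : la = ld
      · by_cases h14 : la = le'
        · subst h12; subst h13; subst h14
          exact pat4 (ℓ := la) (hgood xa xb xd xe (key hab rfl) (key had rfl) (key hae rfl)
            (key hbd rfl) (key hbe rfl) (key hde rfl))
            (by simp) (by simp) (by simp) (by simp)
        · subst h12; subst h13
          exact pat31 (ℓ := la) (ℓ' := le') (x1 := xa) (x2 := xb) (x3 := xd) (y := xe)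
            hodd hpair (Ne.symm (fun h => h14 h.symm)) (key hab rfl)
            (key had rfl) (key hbd rfl) (by simp) (by simp) (by simp) (by simp)
      · by_cases h14 : la = le'
        · subst h12; subst h14
          exact pat31 (ℓ := la) (ℓ' := ld) (x1 := xa) (x2 := xb) (x3 := xe) (y := xd)
            hodd hpair h13 (key hab rfl) (key hae rfl) (key hbe rfl)
            (by simp) (by simp) (by simp) (by simp)
        · subst h12
          by_cases h34 : ld = le'
          · subst h34
            exact pat22 (ℓ1 := la) (ℓ2 := ld) (x1 := xa) (x2 := xb) (y1 := xd) (y2 := xe)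
              hodd hpair h13 (key hab rfl) (key hde rfl)
              (by simp) (by simp) (by simp) (by simp)
          · exact pat211 (ℓ0 := la) (ℓ1 := ld) (ℓ2 := le') (x1 := xa) (x2 := xb) (y := xd) (z := xe)
              hodd hpair h13 h14 h34 (key hab rfl)
              (by simp) (by simp) (by simp) (by simp)
    · by_cases h13 : la = ld
      · by_cases h14 : la = le'
        · subst h13; subst h14
          exact pat31 (ℓ := la) (ℓ' := lb) (x1 := xa) (x2 := xd) (x3 := xe) (y := xb)
            hodd hpair h12 (key had rfl) (key hae rfl) (key hde rfl)
            (by simp) (by simp) (by simp) (by simp)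
        · subst h13
          by_cases h24 : lb = le'
          · subst h24
            exact pat22 (ℓ1 := la) (ℓ2 := lb) (x1 := xa) (x2 := xd) (y1 := xb) (y2 := xe)
              hodd hpair h12 (key had rfl) (key hbe rfl)
              (by simp) (by simp) (by simp) (by simp)
          · exact pat211 (ℓ0 := la) (ℓ1 := lb) (ℓ2 := le') (x1 := xa) (x2 := xd) (y := xb) (z := xe)
              hodd hpair h12 h14 h24 (key had rfl)
              (by simp) (by simp) (by simp) (by simp)
      · by_cases h14 : la = le'
        · subst h14
          by_cases h23 : lb = ld
          · subst h23
            exact pat22 (ℓ1 := la) (ℓ2 := lb) (x1 := xa) (x2 := xe) (y1 := xb) (y2 := xd)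
              hodd hpair h12 (key hae rfl) (key hbd rfl)
              (by simp) (by simp) (by simp) (by simp)
          · exact pat211 (ℓ0 := la) (ℓ1 := lb) (ℓ2 := ld) (x1 := xa) (x2 := xe) (y := xb) (z := xd)
              hodd hpair h12 h13 h23 (key hae rfl)
              (by simp) (by simp) (by simp) (by simp)
        · by_cases h23 : lb = ld
          · by_cases h24 : lb = le'
            · subst h23; subst h24
              exact pat31 (ℓ := lb) (ℓ' := la) (x1 := xb) (x2 := xd) (x3 := xe) (y := xa)
                hodd hpair (Ne.symm h12) (key hbd rfl) (key hbe rfl)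
                (key hde rfl) (by simp) (by simp) (by simp) (by simp)
            · subst h23
              exact pat211 (ℓ0 := lb) (ℓ1 := la) (ℓ2 := le') (x1 := xb) (x2 := xd) (y := xa) (z := xe)
                hodd hpair (Ne.symm h12) h24 h14 (key hbd rfl)
                (by simp) (by simp) (by simp) (by simp)
          · by_cases h24 : lb = le'
            · subst h24
              exact pat211 (ℓ0 := lb) (ℓ1 := la) (ℓ2 := ld) (x1 := xb) (x2 := xe) (y := xa) (z := xd)
                hodd hpair (Ne.symm h12) h23 h13 (key hbe rfl)
                (by simp) (by simp) (by simp) (by simp)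
            · by_cases h34 : ld = le'
              · subst h34
                exact pat211 (ℓ0 := ld) (ℓ1 := la) (ℓ2 := lb) (x1 := xd) (x2 := xe) (y := xa) (z := xb)
                  hodd hpair (Ne.symm h13) (Ne.symm h23) h12 (key hde rfl)
                  (by simp) (by simp) (by simp) (by simp)
              · exact (fin3_pigeon h12 h13 h14 h23 h24 h34).elim
end

section
/- For every n ≥ 4 there exist ⌈log₂ n⌉ edge-colorings of K_n, each using 4 colors, such that for every set of 4 vertices, at least one of the colorings makes some P_4 on those 4 vertices rainbow (its three edges get three distinct colors). -/
namespace Stmt10Aux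

/-- The `i`-th coloring of an edge `{u,v}`, by bit values. -/
def col (i u v : ℕ) : Fin 4 :=
  if u.testBit i = v.testBit i then (if u.testBit i then 0 else 1)
  else if ∀ j < i, u.testBit j = v.testBit j then 2 else 3

lemma col_symm (i u v : ℕ) : col i u v = col i v u := by
  unfold col
  by_cases h : u.testBit i = v.testBit i
  · rw [if_pos h, if_pos h.symm, h]
  · have h' : ¬ v.testBit i = u.testBit i := fun e => h e.symm
    rw [if_neg h, if_neg h']
    have hiff : (∀ j < i, u.testBit j = v.testBit j) ↔ ∀ j < i, v.testBit j = u.testBit j :=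
      ⟨fun hp j hj => (hp j hj).symm, fun hp j hj => (hp j hj).symm⟩
    by_cases hc : ∀ j < i, u.testBit j = v.testBit j
    · rw [if_pos hc, if_pos (hiff.mp hc)]
    · rw [if_neg hc, if_neg (fun hx => hc (hiff.mpr hx))]

lemma ifbool_ne_two (b : Bool) : (if b then (0 : Fin 4) else 1) ≠ 2 := by
  cases b <;> decide

lemma ifbool_ne {b b' : Bool} (h : b ≠ b') :
    (if b then (0 : Fin 4) else 1) ≠ (if b' then 0 else 1) := by
  cases b <;> cases b' <;> first | exact absurd rfl h | decide

lemma bne_trans : ∀ a b c : Bool, ¬(c = a) → ¬(c = b) → a = b := by decide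

/-- Master lemma: the path `x-y-z-w` is rainbow in coloring `i` under these bit conditions. -/
lemma master (i x y z w : ℕ)
    (h1 : y.testBit i ≠ z.testBit i)
    (h2 : z.testBit i = w.testBit i)
    (h3 : ∀ j < i, y.testBit j = z.testBit j)
    (h4 : x.testBit i = y.testBit i ∨ ∃ j, j < i ∧ x.testBit j ≠ y.testBit j) :
    col i x y ≠ col i y z ∧ col i y z ≠ col i z w ∧ col i x y ≠ col i z w := by
  have hyz : col i y z = 2 := by unfold col; rw [if_neg h1, if_pos h3]
  have hzw : col i z w = if z.testBit i then 0 else 1 := by unfold col; rw [if_pos h2]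
  have hxy : col i x y ≠ 2 ∧ col i x y ≠ (if z.testBit i then 0 else 1) := by
    unfold col
    by_cases hxi : x.testBit i = y.testBit i
    · rw [if_pos hxi, hxi]
      exact ⟨ifbool_ne_two _, ifbool_ne h1⟩
    · rcases h4 with h4 | ⟨j, hj, hne⟩
      · exact absurd h4 hxi
      · rw [if_neg hxi, if_neg (fun hall => hne (hall j hj))]
        cases z.testBit i <;> exact ⟨by decide, by decide⟩
  refine ⟨by rw [hyz]; exact hxy.1, ?_, by rw [hzw]; exact hxy.2⟩
  rw [hyz, hzw]
  exact fun h => (ifbool_ne_two (z.testBit i)) h.symm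

lemma exists_testBit_ne {T a b : ℕ} (ha : a < 2 ^ T) (hb : b < 2 ^ T) (h : a ≠ b) :
    ∃ j, j < T ∧ a.testBit j ≠ b.testBit j := by
  by_contra hc
  push_neg at hc
  apply h
  apply Nat.eq_of_testBit_eq
  intro j
  rcases lt_or_ge j T with hj | hj
  · exact hc j hj
  · have hTj : (2 : ℕ) ^ T ≤ 2 ^ j := Nat.pow_le_pow_right (by norm_num) hj
    rw [Nat.testBit_eq_false_of_lt (lt_of_lt_of_le ha hTj),
      Nat.testBit_eq_false_of_lt (lt_of_lt_of_le hb hTj)]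

/-- The 3–1 case: `u` is alone at bit `i`, the trio `p,q,r` agree at all bits `≤ i`. -/
lemma trio {n T : ℕ} (i : ℕ) (u p q r : Fin n)
    (hpT : p.val < 2 ^ T) (hqT : q.val < 2 ^ T)
    (hpq : p ≠ q) (hpr : p ≠ r) (hqr : q ≠ r)
    (hup : u.val.testBit i ≠ p.val.testBit i)
    (huq : u.val.testBit i ≠ q.val.testBit i)
    (hur : u.val.testBit i ≠ r.val.testBit i)
    (hlow : ∀ j ≤ i, p.val.testBit j = q.val.testBit j ∧ p.val.testBit j = r.val.testBit j) :
    ∃ i', i' < T ∧ ∃ x y z w : Fin n,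
      x ≠ y ∧ x ≠ z ∧ x ≠ w ∧ y ≠ z ∧ y ≠ w ∧ z ≠ w ∧
      ({x, y, z, w} : Finset (Fin n)) = {u, p, q, r} ∧
      y.val.testBit i' ≠ z.val.testBit i' ∧ z.val.testBit i' = w.val.testBit i' ∧
      (∀ j < i', y.val.testBit j = z.val.testBit j) ∧
      (x.val.testBit i' = y.val.testBit i' ∨ ∃ j, j < i' ∧ x.val.testBit j ≠ y.val.testBit j) := by
  have hvpq : p.val ≠ q.val := fun h => hpq (Fin.val_injective h)
  obtain ⟨j0, hj0T, hj0⟩ := exists_testBit_ne hpT hqT hvpq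
  have hP : ∃ j, ¬(p.val.testBit j = q.val.testBit j ∧ p.val.testBit j = r.val.testBit j) :=
    ⟨j0, fun hc => hj0 hc.1⟩
  have hPi' := Nat.find_spec hP
  set i' := Nat.find hP with hi'def
  have hmin : ∀ j < i',
      p.val.testBit j = q.val.testBit j ∧ p.val.testBit j = r.val.testBit j :=
    fun j hj => not_not.mp (Nat.find_min hP hj)
  have hii' : i < i' := by
    by_contra hle
    push_neg at hle
    exact hPi' (hlow i' hle)
  have hi'T : i' < T := lt_of_le_of_lt (Nat.find_le (fun hc => hj0 hc.1)) hj0T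
  have hup' : u ≠ p := fun h => hup (by rw [h])
  have huq' : u ≠ q := fun h => huq (by rw [h])
  have hur' : u ≠ r := fun h => hur (by rw [h])
  by_cases hq : p.val.testBit i' = q.val.testBit i' <;>
    by_cases hr : p.val.testBit i' = r.val.testBit i'
  · exact absurd ⟨hq, hr⟩ hPi'
  · -- r alone, pair (p,q): path u - r - p - q
    refine ⟨i', hi'T, u, r, p, q, hur', hup', huq', hpr.symm, hqr.symm, hpq, ?_,
      fun h => hr h.symm, hq, fun j hj => ((hmin j hj).2).symm,
      Or.inr ⟨i, hii', hur⟩⟩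
    ext v
    simp only [Finset.mem_insert, Finset.mem_singleton]
    tauto
  · -- q alone, pair (p,r): path u - q - p - r
    refine ⟨i', hi'T, u, q, p, r, huq', hup', hur', hpq.symm, hqr, hpr, ?_,
      fun h => hq h.symm, hr, fun j hj => ((hmin j hj).1).symm,
      Or.inr ⟨i, hii', huq⟩⟩
    ext v
    simp only [Finset.mem_insert, Finset.mem_singleton]
    tauto
  · -- p alone, pair (q,r): path u - p - q - r
    exact ⟨i', hi'T, u, p, q, r, hup', huq', hur', hpq, hpr, hqr, rfl,
      hq, bne_trans _ _ _ hq hr, fun j hj => (hmin j hj).1,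
      Or.inr ⟨i, hii', hup⟩⟩

set_option maxHeartbeats 2000000 in
/-- Main combinatorial lemma: some coloring index and rainbow path exists. -/
lemma config {n T : ℕ} (a b d e : Fin n)
    (haT : a.val < 2 ^ T) (hbT : b.val < 2 ^ T) (hdT : d.val < 2 ^ T) (heT : e.val < 2 ^ T)
    (hab : a ≠ b) (had : a ≠ d) (hae : a ≠ e) (hbd : b ≠ d) (hbe : b ≠ e) (hde : d ≠ e) :
    ∃ i, i < T ∧ ∃ x y z w : Fin n,
      x ≠ y ∧ x ≠ z ∧ x ≠ w ∧ y ≠ z ∧ y ≠ w ∧ z ≠ w ∧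
      ({x, y, z, w} : Finset (Fin n)) = {a, b, d, e} ∧
      y.val.testBit i ≠ z.val.testBit i ∧ z.val.testBit i = w.val.testBit i ∧
      (∀ j < i, y.val.testBit j = z.val.testBit j) ∧
      (x.val.testBit i = y.val.testBit i ∨ ∃ j, j < i ∧ x.val.testBit j ≠ y.val.testBit j) := by
  have hvab : a.val ≠ b.val := fun h => hab (Fin.val_injective h)
  obtain ⟨j0, hj0T, hj0⟩ := exists_testBit_ne haT hbT hvab
  have hP : ∃ j, ¬(a.val.testBit j = b.val.testBit j ∧ a.val.testBit j = d.val.testBit j ∧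
      a.val.testBit j = e.val.testBit j) := ⟨j0, fun hc => hj0 hc.1⟩
  have hPi := Nat.find_spec hP
  set i := Nat.find hP with hidef
  have hmin : ∀ j < i, a.val.testBit j = b.val.testBit j ∧ a.val.testBit j = d.val.testBit j ∧
      a.val.testBit j = e.val.testBit j := fun j hj => not_not.mp (Nat.find_min hP hj)
  have hiT : i < T := lt_of_le_of_lt (Nat.find_le (fun hc => hj0 hc.1)) hj0T
  by_cases hb : a.val.testBit i = b.val.testBit i <;>
    by_cases hd : a.val.testBit i = d.val.testBit i <;>
    by_cases he : a.val.testBit i = e.val.testBit i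
  · exact absurd ⟨hb, hd, he⟩ hPi
  · -- (T,T,F): trio {a,b,d}, lone e
    have hlow : ∀ j ≤ i, a.val.testBit j = b.val.testBit j ∧
        a.val.testBit j = d.val.testBit j := by
      intro j hj
      rcases lt_or_eq_of_le hj with hj | hj
      · exact ⟨(hmin j hj).1, (hmin j hj).2.1⟩
      · subst hj; exact ⟨hb, hd⟩
    obtain ⟨i', hi'T, x, y, z, w, d1, d2, d3, d4, d5, d6, hset, rest⟩ :=
      trio (T := T) i e a b d haT hbT hab had hbd
        (fun h => he h.symm) (fun h => he (hb.trans h.symm))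
        (fun h => he (hd.trans h.symm)) hlow
    have hperm : ({e, a, b, d} : Finset (Fin n)) = {a, b, d, e} := by
      ext v; simp only [Finset.mem_insert, Finset.mem_singleton]; tauto
    exact ⟨i', hi'T, x, y, z, w, d1, d2, d3, d4, d5, d6, hset.trans hperm, rest⟩
  · -- (T,F,T): trio {a,b,e}, lone d
    have hlow : ∀ j ≤ i, a.val.testBit j = b.val.testBit j ∧
        a.val.testBit j = e.val.testBit j := by
      intro j hj
      rcases lt_or_eq_of_le hj with hj | hj
      · exact ⟨(hmin j hj).1, (hmin j hj).2.2⟩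
      · subst hj; exact ⟨hb, he⟩
    obtain ⟨i', hi'T, x, y, z, w, d1, d2, d3, d4, d5, d6, hset, rest⟩ :=
      trio (T := T) i d a b e haT hbT hab hae hbe
        (fun h => hd h.symm) (fun h => hd (hb.trans h.symm))
        (fun h => hd (he.trans h.symm)) hlow
    have hperm : ({d, a, b, e} : Finset (Fin n)) = {a, b, d, e} := by
      ext v; simp only [Finset.mem_insert, Finset.mem_singleton]; tauto
    exact ⟨i', hi'T, x, y, z, w, d1, d2, d3, d4, d5, d6, hset.trans hperm, rest⟩
  · -- (T,F,F): 2-2 split {a,b} vs {d,e}: path a - b - d - e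
    exact ⟨i, hiT, a, b, d, e, hab, had, hae, hbd, hbe, hde, rfl,
      fun h => hd (hb.trans h), bne_trans _ _ _ hd he,
      fun j hj => ((hmin j hj).1.symm.trans (hmin j hj).2.1), Or.inl hb⟩
  · -- (F,T,T): trio {a,d,e}, lone b
    have hlow : ∀ j ≤ i, a.val.testBit j = d.val.testBit j ∧
        a.val.testBit j = e.val.testBit j := by
      intro j hj
      rcases lt_or_eq_of_le hj with hj | hj
      · exact ⟨(hmin j hj).2.1, (hmin j hj).2.2⟩
      · subst hj; exact ⟨hd, he⟩
    obtain ⟨i', hi'T, x, y, z, w, d1, d2, d3, d4, d5, d6, hset, rest⟩ :=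
      trio (T := T) i b a d e haT hdT had hae hde
        (fun h => hb h.symm) (fun h => hb (hd.trans h.symm))
        (fun h => hb (he.trans h.symm)) hlow
    have hperm : ({b, a, d, e} : Finset (Fin n)) = {a, b, d, e} := by
      ext v; simp only [Finset.mem_insert, Finset.mem_singleton]; tauto
    exact ⟨i', hi'T, x, y, z, w, d1, d2, d3, d4, d5, d6, hset.trans hperm, rest⟩
  · -- (F,T,F): 2-2 split {a,d} vs {b,e}: path a - d - b - e
    have hperm : ({a, d, b, e} : Finset (Fin n)) = {a, b, d, e} := by
      ext v; simp only [Finset.mem_insert, Finset.mem_singleton]; tauto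
    exact ⟨i, hiT, a, d, b, e, had, hab, hae, hbd.symm, hde, hbe, hperm,
      fun h => hb (hd.trans h), bne_trans _ _ _ hb he,
      fun j hj => ((hmin j hj).2.1.symm.trans (hmin j hj).1), Or.inl hd⟩
  · -- (F,F,T): 2-2 split {a,e} vs {b,d}: path a - e - b - d
    have hperm : ({a, e, b, d} : Finset (Fin n)) = {a, b, d, e} := by
      ext v; simp only [Finset.mem_insert, Finset.mem_singleton]; tauto
    exact ⟨i, hiT, a, e, b, d, hae, hab, had, hbe.symm, hde.symm, hbd, hperm,
      fun h => hb (he.trans h), bne_trans _ _ _ hb hd,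
      fun j hj => ((hmin j hj).2.2.symm.trans (hmin j hj).1), Or.inl he⟩
  · -- (F,F,F): trio {b,d,e}, lone a
    have hlow : ∀ j ≤ i, b.val.testBit j = d.val.testBit j ∧
        b.val.testBit j = e.val.testBit j := by
      intro j hj
      rcases lt_or_eq_of_le hj with hj | hj
      · exact ⟨(hmin j hj).1.symm.trans (hmin j hj).2.1,
          (hmin j hj).1.symm.trans (hmin j hj).2.2⟩
      · subst hj; exact ⟨bne_trans _ _ _ hb hd, bne_trans _ _ _ hb he⟩
    obtain ⟨i', hi'T, x, y, z, w, d1, d2, d3, d4, d5, d6, hset, rest⟩ :=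
      trio (T := T) i a b d e hbT hdT hbd hbe hde hb hd he hlow
    exact ⟨i', hi'T, x, y, z, w, d1, d2, d3, d4, d5, d6, hset, rest⟩

end Stmt10Aux

/-- For every `n ≥ 4` there exist `⌈log₂ n⌉` edge-colorings of `K_n`, each with 4
colors, such that every 4-set of vertices carries, in at least one of the colorings,
a rainbow `P_4` (a path on the four vertices whose three edges get distinct colors). -/
theorem stmt_10 (n : ℕ) (hn : 4 ≤ n) :
    ∃ c : Fin (Nat.clog 2 n) → Sym2 (Fin n) → Fin 4,
      ∀ a b d e : Fin n, a ≠ b → a ≠ d → a ≠ e → b ≠ d → b ≠ e → d ≠ e →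
        ∃ (i : Fin (Nat.clog 2 n)) (x y z w : Fin n),
          x ≠ y ∧ x ≠ z ∧ x ≠ w ∧ y ≠ z ∧ y ≠ w ∧ z ≠ w ∧
          ({x, y, z, w} : Finset (Fin n)) = {a, b, d, e} ∧
          c i s(x, y) ≠ c i s(y, z) ∧ c i s(y, z) ≠ c i s(z, w) ∧
          c i s(x, y) ≠ c i s(z, w) := by
  have hnT : n ≤ 2 ^ Nat.clog 2 n := Nat.le_pow_clog (by norm_num) n
  refine ⟨fun i => Sym2.lift ⟨fun u v => Stmt10Aux.col i.val u.val v.val,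
    fun u v => Stmt10Aux.col_symm _ _ _⟩, ?_⟩
  intro a b d e hab had hae hbd hbe hde
  have hbound : ∀ v : Fin n, v.val < 2 ^ Nat.clog 2 n := fun v => lt_of_lt_of_le v.isLt hnT
  obtain ⟨i, hiT, x, y, z, w, d1, d2, d3, d4, d5, d6, hset, h1, h2, h3, h4⟩ :=
    Stmt10Aux.config a b d e (hbound a) (hbound b) (hbound d) (hbound e)
      hab had hae hbd hbe hde
  obtain ⟨c1, c2, c3⟩ := Stmt10Aux.master i x.val y.val z.val w.val h1 h2 h3 h4
  exact ⟨⟨i, hiT⟩, x, y, z, w, d1, d2, d3, d4, d5, d6, hset, c1, c2, c3⟩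
end

section
/- Let a,b,c,d be four distinct binary strings of length t. Then either there exists a coordinate i where exactly two of a_i, b_i, c_i, d_i equal 0, or there exist at least three coordinates in each of which exactly one of the four strings differs from the other three. -/
lemma key_allEq (w x y z : Bool) (h2 : ([w,x,y,z].count false) ≠ 2)
    (h13 : ¬(([w,x,y,z].count false) = 1 ∨ ([w,x,y,z].count false) = 3)) :
    w = x ∧ w = y ∧ w = z := by
  revert h2 h13; revert w x y z; decide

lemma key_odd (w x y z : Bool)
    (h13 : ([w,x,y,z].count false) = 1 ∨ ([w,x,y,z].count false) = 3) :
    ∃ m : Fin 4, ∀ p q : Fin 4, p ≠ m → q ≠ m → ![w,x,y,z] p = ![w,x,y,z] q := by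
  revert h13; revert w x y z; decide

/-- For four pairwise distinct binary strings `a,b,c,d` of length `t`, either some
coordinate has exactly two of the four values equal to 0 (`false`), or there are at
least three coordinates at each of which exactly one of the four strings differs from
the other three (the count of `false`s among the four values is 1 or 3). -/
theorem stmt_11 (t : ℕ) (a b c d : Fin t → Bool)
    (hab : a ≠ b) (hac : a ≠ c) (had : a ≠ d) (hbc : b ≠ c) (hbd : b ≠ d) (hcd : c ≠ d) :
    (∃ i : Fin t, ([a i, b i, c i, d i].count false) = 2) ∨
    (∃ i j k : Fin t, i ≠ j ∧ i ≠ k ∧ j ≠ k ∧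
      (([a i, b i, c i, d i].count false) = 1 ∨ ([a i, b i, c i, d i].count false) = 3) ∧
      (([a j, b j, c j, d j].count false) = 1 ∨ ([a j, b j, c j, d j].count false) = 3) ∧
      (([a k, b k, c k, d k].count false) = 1 ∨ ([a k, b k, c k, d k].count false) = 3)) := by
  by_cases h2 : ∃ i : Fin t, ([a i, b i, c i, d i].count false) = 2
  · exact Or.inl h2
  push_neg at h2
  right
  set F : Finset (Fin t) :=
    Finset.univ.filter (fun i => ([a i, b i, c i, d i].count false) = 1 ∨
      ([a i, b i, c i, d i].count false) = 3) with hF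
  by_cases hcard : 3 ≤ F.card
  · obtain ⟨s, hsub, hs3⟩ := Finset.exists_subset_card_eq hcard
    obtain ⟨i, j, k, hij, hik, hjk, rfl⟩ := Finset.card_eq_three.mp hs3
    have hi := hsub (by simp : i ∈ ({i,j,k} : Finset (Fin t)))
    have hj := hsub (by simp : j ∈ ({i,j,k} : Finset (Fin t)))
    have hk := hsub (by simp : k ∈ ({i,j,k} : Finset (Fin t)))
    rw [hF, Finset.mem_filter] at hi hj hk
    exact ⟨i, j, k, hij, hik, hjk, hi.2, hj.2, hk.2⟩
  · exfalso
    push_neg at hcard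
    -- choose an "odd index" for each coordinate
    have hex : ∀ i : Fin t, ∃ m : Fin 4, i ∈ F →
        ∀ p q : Fin 4, p ≠ m → q ≠ m →
          ![a i, b i, c i, d i] p = ![a i, b i, c i, d i] q := by
      intro i
      by_cases hi : i ∈ F
      · rw [hF, Finset.mem_filter] at hi
        obtain ⟨m, hm⟩ := key_odd (a i) (b i) (c i) (d i) hi.2
        exact ⟨m, fun _ => hm⟩
      · exact ⟨0, fun h => absurd h hi⟩
    choose odd hodd using hex
    set M : Finset (Fin 4) := F.image odd with hM
    have hMcard : M.card ≤ 2 := le_trans (Finset.card_image_le) (by omega)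
    have hcompl : 1 < Mᶜ.card := by
      have := Finset.card_compl M
      simp only [Fintype.card_fin] at this
      omega
    obtain ⟨p, hp, q, hq, hpq⟩ := Finset.one_lt_card.mp hcompl
    have hpM : p ∉ M := by simpa using hp
    have hqM : q ∉ M := by simpa using hq
    -- the strings indexed by p and q agree everywhere
    have hagree : ∀ i : Fin t, ![a i, b i, c i, d i] p = ![a i, b i, c i, d i] q := by
      intro i
      by_cases hi : i ∈ F
      · have hoddM : odd i ∈ M := by
          rw [hM]; exact Finset.mem_image_of_mem odd hi
        exact hodd i hi p q (fun h => hpM (h ▸ hoddM)) (fun h => hqM (h ▸ hoddM))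
      · have h13 : ¬(([a i, b i, c i, d i].count false) = 1 ∨
            ([a i, b i, c i, d i].count false) = 3) := by
          intro h; exact hi (by rw [hF, Finset.mem_filter]; exact ⟨Finset.mem_univ i, h⟩)
        obtain ⟨e1, e2, e3⟩ := key_allEq (a i) (b i) (c i) (d i) (h2 i) h13
        fin_cases p <;> fin_cases q <;> simp [← e1, ← e2, ← e3]
    -- contradiction with pairwise distinctness
    fin_cases p <;> fin_cases q <;> simp at hpq hagree <;>
      first
        | exact hab (funext fun i => by simpa using hagree i)
        | exact hac (funext fun i => by simpa using hagree i)
        | exact had (funext fun i => by simpa using hagree i)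
        | exact hbc (funext fun i => by simpa using hagree i)
        | exact hbd (funext fun i => by simpa using hagree i)
        | exact hcd (funext fun i => by simpa using hagree i)
        | exact hab (funext fun i => by simpa using (hagree i).symm)
        | exact hac (funext fun i => by simpa using (hagree i).symm)
        | exact had (funext fun i => by simpa using (hagree i).symm)
        | exact hbc (funext fun i => by simpa using (hagree i).symm)
        | exact hbd (funext fun i => by simpa using (hagree i).symm)
        | exact hcd (funext fun i => by simpa using (hagree i).symm)
end

section
/- p(n) ≤ 2⌈log₂ n⌉, where p(n) is the minimum number of 3-edge-colorings of K_n needed so that every 4-element vertex subset contains, in at least one coloring, a P_4 whose three edges receive three distinct colors. -/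
/-- Auxiliary: the two 3-colorings associated with bit `j` (index `i`, bit `j = i/2`):
color of edge `{u,v}` depends on the `j`-th bits of `min` and `max` of the values. -/
def auxEdgeCol (n : ℕ) (i : ℕ) : Sym2 (Fin n) → Fin 3 :=
  Sym2.lift ⟨fun u v =>
    if i % 2 = 0 then
      (if Nat.testBit (min u.val v.val) (i / 2) then
        (if Nat.testBit (max u.val v.val) (i / 2) then 2 else 1) else 0)
    else
      (if Nat.testBit (min u.val v.val) (i / 2) then 2 else
        (if Nat.testBit (max u.val v.val) (i / 2) then 1 else 0)),
   by intro u v; simp [min_comm, max_comm]⟩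

lemma auxEdgeCol_eval {n : ℕ} (i : ℕ) (u v : Fin n) (h : u.val ≤ v.val) :
    auxEdgeCol n i s(u, v) =
      (if i % 2 = 0 then
        (if Nat.testBit u.val (i / 2) then
          (if Nat.testBit v.val (i / 2) then 2 else 1) else 0)
      else
        (if Nat.testBit u.val (i / 2) then 2 else
          (if Nat.testBit v.val (i / 2) then 1 else 0))) := by
  rw [auxEdgeCol, Sym2.lift_mk]
  simp only [min_eq_left h, max_eq_right h]

/-- Highest differing bit of `a < b`: bit of `a` is false, of `b` is true, and it is
below any `k` with `a, b < 2^k`. -/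
lemma aux_highBit {a b : ℕ} (hab : a < b) :
    ∃ j, Nat.testBit a j = false ∧ Nat.testBit b j = true ∧
      ∀ k, a < 2 ^ k → b < 2 ^ k → j < k := by
  have hne : a ^^^ b ≠ 0 := by
    intro h
    exact absurd (xor_eq_zero_iff.mp h) (Nat.ne_of_lt hab)
  set m := a ^^^ b with hm
  set j := m.log2 with hj
  have h1 : 2 ^ j ≤ m := Nat.log2_self_le hne
  have h2 : m < 2 ^ (j + 1) := Nat.lt_log2_self
  have hmj : Nat.testBit m j = true := by
    rw [Nat.testBit_eq_decide_div_mod_eq]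
    have : m / 2 ^ j = 1 := by
      apply Nat.div_eq_of_lt_le
      · simpa using h1
      · simpa [Nat.pow_succ, Nat.mul_comm] using h2
    simp [this]
  have hdiff : Nat.testBit a j ≠ Nat.testBit b j := by
    intro h
    rw [hm, Nat.testBit_xor, h, Bool.xor_self] at hmj
    exact Bool.false_ne_true hmj
  have hhigh : ∀ j', j < j' → Nat.testBit a j' = Nat.testBit b j' := by
    intro j' hj'
    have hf : Nat.testBit m j' = false :=
      Nat.testBit_eq_false_of_lt (lt_of_lt_of_le h2 (Nat.pow_le_pow_right (by norm_num) hj'))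
    rw [hm, Nat.testBit_xor] at hf
    cases ha : Nat.testBit a j' <;> cases hb : Nat.testBit b j' <;> simp_all
  have hba : Nat.testBit a j = false ∧ Nat.testBit b j = true := by
    cases ha : Nat.testBit a j <;> cases hb : Nat.testBit b j
    · exact absurd (ha.trans hb.symm) hdiff
    · exact ⟨rfl, rfl⟩
    · exact absurd (Nat.lt_of_testBit j hb ha fun j' hj' => (hhigh j' hj').symm)
        (Nat.lt_asymm hab)
    · exact absurd (ha.trans hb.symm) hdiff
  refine ⟨j, hba.1, hba.2, fun k hak hbk => ?_⟩
  rw [hj, Nat.log2_lt hne]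
  exact Nat.xor_lt_two_pow hak hbk

/-- `p(n) ≤ 2⌈log₂ n⌉`: there exist `2⌈log₂ n⌉` edge-colorings of `K_n`, each with
3 colors, such that every 4-set of vertices carries, in at least one of the colorings,
a `P_4` whose three edges receive three distinct colors. -/
theorem stmt_13 (n : ℕ) (hn : 4 ≤ n) :
    ∃ c : Fin (2 * Nat.clog 2 n) → Sym2 (Fin n) → Fin 3,
      ∀ a b d e : Fin n, a ≠ b → a ≠ d → a ≠ e → b ≠ d → b ≠ e → d ≠ e →
        ∃ (i : Fin (2 * Nat.clog 2 n)) (x y z w : Fin n),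
          x ≠ y ∧ x ≠ z ∧ x ≠ w ∧ y ≠ z ∧ y ≠ w ∧ z ≠ w ∧
          ({x, y, z, w} : Finset (Fin n)) = {a, b, d, e} ∧
          c i s(x, y) ≠ c i s(y, z) ∧ c i s(y, z) ≠ c i s(z, w) ∧
          c i s(x, y) ≠ c i s(z, w) := by
  classical
  set K := Nat.clog 2 n with hK
  refine ⟨fun i => auxEdgeCol n i.val, ?_⟩
  -- First, a sorted version of the claim.
  have key : ∀ v0 v1 v2 v3 : Fin n, v0 < v1 → v1 < v2 → v2 < v3 →
      ∃ (i : Fin (2 * K)) (x y z w : Fin n),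
        x ≠ y ∧ x ≠ z ∧ x ≠ w ∧ y ≠ z ∧ y ≠ w ∧ z ≠ w ∧
        ({x, y, z, w} : Finset (Fin n)) = {v0, v1, v2, v3} ∧
        auxEdgeCol n i.val s(x, y) ≠ auxEdgeCol n i.val s(y, z) ∧
        auxEdgeCol n i.val s(y, z) ≠ auxEdgeCol n i.val s(z, w) ∧
        auxEdgeCol n i.val s(x, y) ≠ auxEdgeCol n i.val s(z, w) := by
    intro v0 v1 v2 v3 h01 h12 h23
    obtain ⟨j, hb1, hb2, hjlt⟩ := aux_highBit (show v1.val < v2.val from h12)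
    have hnK : n ≤ 2 ^ K := Nat.le_pow_clog (by norm_num) n
    have hjK : j < K := hjlt K (lt_of_lt_of_le v1.isLt hnK) (lt_of_lt_of_le v2.isLt hnK)
    have hi0 : 2 * j < 2 * K := by omega
    have hi1 : 2 * j + 1 < 2 * K := by omega
    have e01 : (2 * j) / 2 = j := by omega
    have e0m : (2 * j) % 2 = 0 := by omega
    have e11 : (2 * j + 1) / 2 = j := by omega
    have e1m : (2 * j + 1) % 2 = 1 := by omega
    have h02 : v0 < v2 := h01.trans h12
    have h13 : v1 < v3 := h12.trans h23
    have h03 : v0 < v3 := h01.trans h13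
    have hne01 : v0 ≠ v1 := ne_of_lt h01
    have hne02 : v0 ≠ v2 := ne_of_lt h02
    have hne03 : v0 ≠ v3 := ne_of_lt h03
    have hne12 : v1 ≠ v2 := ne_of_lt h12
    have hne13 : v1 ≠ v3 := ne_of_lt h13
    have hne23 : v2 ≠ v3 := ne_of_lt h23
    cases hb0 : Nat.testBit v0.val j with
    | false =>
      -- pattern (F, F, T, ?): use coord1 (index 2j+1), path v0 v1 v2 v3
      have c01 : auxEdgeCol n (2 * j + 1) s(v0, v1) = 0 := by
        rw [auxEdgeCol_eval _ _ _ h01.le]; simp [e11, e1m, hb0, hb1]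
      have c12 : auxEdgeCol n (2 * j + 1) s(v1, v2) = 1 := by
        rw [auxEdgeCol_eval _ _ _ h12.le]; simp [e11, e1m, hb1, hb2]
      have c23 : auxEdgeCol n (2 * j + 1) s(v2, v3) = 2 := by
        rw [auxEdgeCol_eval _ _ _ h23.le]; simp [e11, e1m, hb2]
      exact ⟨⟨2 * j + 1, hi1⟩, v0, v1, v2, v3, hne01, hne02, hne03, hne12, hne13, hne23,
        rfl, by rw [c01, c12]; decide, by rw [c12, c23]; decide, by rw [c01, c23]; decide⟩
    | true =>
      cases hb3 : Nat.testBit v3.val j with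
      | false =>
        -- pattern (T, F, T, F): path v0 v2 v1 v3, coord1
        have c02 : auxEdgeCol n (2 * j + 1) s(v0, v2) = 2 := by
          rw [auxEdgeCol_eval _ _ _ h02.le]; simp [e11, e1m, hb0]
        have c21 : auxEdgeCol n (2 * j + 1) s(v2, v1) = 1 := by
          rw [Sym2.eq_swap, auxEdgeCol_eval _ _ _ h12.le]; simp [e11, e1m, hb1, hb2]
        have c13 : auxEdgeCol n (2 * j + 1) s(v1, v3) = 0 := by
          rw [auxEdgeCol_eval _ _ _ h13.le]; simp [e11, e1m, hb1, hb3]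
        refine ⟨⟨2 * j + 1, hi1⟩, v0, v2, v1, v3, hne02, hne01, hne03, hne12.symm,
          hne23, hne13, ?_, by rw [c02, c21]; decide, by rw [c21, c13]; decide,
          by rw [c02, c13]; decide⟩
        ext t; simp [Finset.mem_insert]; tauto
      | true =>
        -- pattern (T, F, T, T): path v0 v1 v2 v3, coord0 (index 2j)
        have c01 : auxEdgeCol n (2 * j) s(v0, v1) = 1 := by
          rw [auxEdgeCol_eval _ _ _ h01.le]; simp [e01, e0m, hb0, hb1]
        have c12 : auxEdgeCol n (2 * j) s(v1, v2) = 0 := by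
          rw [auxEdgeCol_eval _ _ _ h12.le]; simp [e01, e0m, hb1]
        have c23 : auxEdgeCol n (2 * j) s(v2, v3) = 2 := by
          rw [auxEdgeCol_eval _ _ _ h23.le]; simp [e01, e0m, hb2, hb3]
        exact ⟨⟨2 * j, hi0⟩, v0, v1, v2, v3, hne01, hne02, hne03, hne12, hne13, hne23,
          rfl, by rw [c01, c12]; decide, by rw [c12, c23]; decide, by rw [c01, c23]; decide⟩
  -- Now reduce the general case to the sorted one.
  intro a b d e hab had hae hbd hbe hde
  set S : Finset (Fin n) := {a, b, d, e} with hS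
  have hcard : S.card = 4 := by
    rw [hS]
    rw [Finset.card_insert_of_notMem (by simp [hab, had, hae]),
        Finset.card_insert_of_notMem (by simp [hbd, hbe]),
        Finset.card_insert_of_notMem (by simp [hde]), Finset.card_singleton]
  have hlen : (S.sort (· ≤ ·)).length = 4 := by rw [Finset.length_sort, hcard]
  obtain ⟨v0, v1, v2, v3, hL⟩ : ∃ v0 v1 v2 v3, S.sort (· ≤ ·) = [v0, v1, v2, v3] := by
    rcases hl : S.sort (· ≤ ·) with _ | ⟨x0, _ | ⟨x1, _ | ⟨x2, _ | ⟨x3, _ | ⟨x4, l⟩⟩⟩⟩⟩ <;>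
        rw [hl] at hlen <;>
        simp only [List.length_cons, List.length_nil] at hlen <;>
      first
        | exact ⟨_, _, _, _, rfl⟩
        | omega
  have hsorted := (Finset.sortedLT_sort S).pairwise
  rw [hL] at hsorted
  have h01 : v0 < v1 := (List.pairwise_cons.mp hsorted).1 v1 (by simp)
  have hs1 := (List.pairwise_cons.mp hsorted).2
  have h12 : v1 < v2 := (List.pairwise_cons.mp hs1).1 v2 (by simp)
  have hs2 := (List.pairwise_cons.mp hs1).2
  have h23 : v2 < v3 := (List.pairwise_cons.mp hs2).1 v3 (by simp)
  have hset : ({v0, v1, v2, v3} : Finset (Fin n)) = S := by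
    have := Finset.sort_toFinset S (· ≤ ·)
    rw [hL] at this
    simpa using this
  obtain ⟨i, x, y, z, w, hxy, hxz, hxw, hyz, hyw, hzw, hsxy, hc1, hc2, hc3⟩ :=
    key v0 v1 v2 v3 h01 h12 h23
  exact ⟨i, x, y, z, w, hxy, hxz, hxw, hyz, hyw, hzw, by rw [hsxy, hset], hc1, hc2, hc3⟩
end

section
/- If an edge-coloring of K_4 uses at least 4 colors, then K_4 contains at least 4 distinct rainbow copies of P_4 (paths on 4 vertices whose 3 edges have 3 distinct colors). -/
set_option maxRecDepth 100000
set_option maxHeartbeats 1000000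
open Fin.NatCast

def eV : Fin 6 → Sym2 (Fin 4)
  | 0 => s(0,1) | 1 => s(0,2) | 2 => s(0,3) | 3 => s(1,2) | 4 => s(1,3) | 5 => s(2,3)

def trip : Fin 12 → Fin 6 × Fin 6 × Fin 6
  | 0 => (1,0,4) | 1 => (2,0,3) | 2 => (0,1,5) | 3 => (2,1,3)
  | 4 => (0,2,5) | 5 => (1,2,4) | 6 => (0,3,5) | 7 => (4,3,1)
  | 8 => (0,4,5) | 9 => (3,4,2) | 10 => (1,5,4) | 11 => (3,5,2)

def quad : Fin 12 → Fin 4 × Fin 4 × Fin 4 × Fin 4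
  | 0 => (2,0,1,3) | 1 => (3,0,1,2) | 2 => (1,0,2,3) | 3 => (3,0,2,1)
  | 4 => (1,0,3,2) | 5 => (2,0,3,1) | 6 => (0,1,2,3) | 7 => (3,1,2,0)
  | 8 => (0,1,3,2) | 9 => (2,1,3,0) | 10 => (0,2,3,1) | 11 => (1,2,3,0)

def pathF (i : Fin 12) : Finset (Sym2 (Fin 4)) :=
  {s((quad i).1, (quad i).2.1), s((quad i).2.1, (quad i).2.2.1), s((quad i).2.2.1, (quad i).2.2.2)}

def rb (r : Fin 6 → Fin 6) (i : Fin 12) : Prop :=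
  r (trip i).1 ≠ r (trip i).2.1 ∧ r (trip i).2.1 ≠ r (trip i).2.2 ∧ r (trip i).1 ≠ r (trip i).2.2

instance rbdec (r : Fin 6 → Fin 6) : DecidablePred (rb r) := fun _ => by unfold rb; infer_instance

def rr (n : Nat) : Fin 6 → Fin 6
  | 0 => (n % 6 : Nat) | 1 => (n / 6 % 6 : Nat) | 2 => (n / 36 % 6 : Nat)
  | 3 => (n / 216 % 6 : Nat) | 4 => (n / 1296 % 6 : Nat) | 5 => (n / 7776 % 6 : Nat)

def check (n : Nat) : Bool :=
  !(decide (4 ≤ ([rr n 0, rr n 1, rr n 2, rr n 3, rr n 4, rr n 5].dedup).length)) ||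
    decide (4 ≤ ((List.finRange 12).filter fun i => rb (rr n) i).length)

theorem allok : ∀ b < 2, ∀ c < 3, ∀ d < 4, ∀ e < 5, ∀ f < 6,
    check (6*b + 36*c + 216*d + 1296*e + 7776*f) = true := by decide

theorem quad_distinct : ∀ i : Fin 12,
    (quad i).1 ≠ (quad i).2.1 ∧ (quad i).1 ≠ (quad i).2.2.1 ∧ (quad i).1 ≠ (quad i).2.2.2 ∧
    (quad i).2.1 ≠ (quad i).2.2.1 ∧ (quad i).2.1 ≠ (quad i).2.2.2 ∧
    (quad i).2.2.1 ≠ (quad i).2.2.2 := by decide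

theorem consist : ∀ i : Fin 12,
    eV (trip i).1 = s((quad i).1, (quad i).2.1) ∧
    eV (trip i).2.1 = s((quad i).2.1, (quad i).2.2.1) ∧
    eV (trip i).2.2 = s((quad i).2.2.1, (quad i).2.2.2) := by decide

theorem pathF_inj : Function.Injective pathF := by decide

theorem eV_surj : ∀ u v : Fin 4, u ≠ v → ∃ i : Fin 6, eV i = s(u,v) := by decide

theorem eV_spec : ∀ i : Fin 6, ∃ u v : Fin 4, u ≠ v ∧ eV i = s(u,v) := by decide

noncomputable def rOf {C : Type*} (c : Sym2 (Fin 4) → C) (i : Fin 6) : Fin 6 :=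
  letI := Classical.decEq C
  (Finset.univ.filter fun j => c (eV j) = c (eV i)).min'
    ⟨i, Finset.mem_filter.2 ⟨Finset.mem_univ i, rfl⟩⟩

section
variable {C : Type*} (c : Sym2 (Fin 4) → C)

theorem rOf_le (i : Fin 6) : rOf c i ≤ i := by
  letI := Classical.decEq C
  have hm : i ∈ Finset.univ.filter (fun j => c (eV j) = c (eV i)) :=
    Finset.mem_filter.2 ⟨Finset.mem_univ i, rfl⟩
  unfold rOf
  exact Finset.min'_le _ _ hm

theorem c_rOf (i : Fin 6) : c (eV (rOf c i)) = c (eV i) := by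
  letI := Classical.decEq C
  have h := Finset.min'_mem (Finset.univ.filter fun j => c (eV j) = c (eV i))
    ⟨i, Finset.mem_filter.2 ⟨Finset.mem_univ i, rfl⟩⟩
  exact (Finset.mem_filter.1 h).2

theorem rOf_eq_iff (i j : Fin 6) : c (eV i) = c (eV j) ↔ rOf c i = rOf c j := by
  letI := Classical.decEq C
  constructor
  · intro h
    have hs : (Finset.univ.filter fun k => c (eV k) = c (eV i)) =
        (Finset.univ.filter fun k => c (eV k) = c (eV j)) := by
      ext k
      simp only [Finset.mem_filter, Finset.mem_univ, true_and, h]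
    have hm1 : rOf c j ∈ (Finset.univ.filter fun k => c (eV k) = c (eV i)) := by
      rw [hs]; unfold rOf; exact Finset.min'_mem _ _
    have hm2 : rOf c i ∈ (Finset.univ.filter fun k => c (eV k) = c (eV j)) := by
      rw [← hs]; unfold rOf; exact Finset.min'_mem _ _
    have h1 : rOf c i ≤ rOf c j := by
      unfold rOf; exact Finset.min'_le _ _ hm1
    have h2 : rOf c j ≤ rOf c i := by
      unfold rOf; exact Finset.min'_le _ _ hm2
    exact le_antisymm h1 h2
  · intro h
    calc c (eV i) = c (eV (rOf c i)) := (c_rOf c i).symm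
    _ = c (eV (rOf c j)) := by rw [h]
    _ = c (eV j) := c_rOf c j

end

theorem key_s14 (r : Fin 6 → Fin 6) (hle : ∀ i, r i ≤ i)
    (hcard : 4 ≤ (Finset.image r Finset.univ).card) :
    4 ≤ ((List.finRange 12).filter fun i => rb r i).length := by
  have hv : ∀ i : Fin 6, (r i).val ≤ i.val := fun i => hle i
  have hb : ∀ i : Fin 6, (r i).val < 6 := fun i => (r i).isLt
  set n := 6*(r 1).val + 36*(r 2).val + 216*(r 3).val + 1296*(r 4).val + 7776*(r 5).val with hn
  have h0 : (r 0).val = 0 := Nat.le_zero.1 (hv 0)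
  have b1 := hb 1; have b2 := hb 2; have b3 := hb 3; have b4 := hb 4; have b5 := hb 5
  have e0 : rr n 0 = r 0 := by
    apply Fin.ext; rw [show rr n 0 = ((n % 6 : Nat) : Fin 6) from rfl, Fin.val_natCast]; omega
  have e1 : rr n 1 = r 1 := by
    apply Fin.ext; rw [show rr n 1 = ((n / 6 % 6 : Nat) : Fin 6) from rfl, Fin.val_natCast]; omega
  have e2 : rr n 2 = r 2 := by
    apply Fin.ext; rw [show rr n 2 = ((n / 36 % 6 : Nat) : Fin 6) from rfl, Fin.val_natCast]; omega
  have e3 : rr n 3 = r 3 := by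
    apply Fin.ext; rw [show rr n 3 = ((n / 216 % 6 : Nat) : Fin 6) from rfl, Fin.val_natCast]; omega
  have e4 : rr n 4 = r 4 := by
    apply Fin.ext; rw [show rr n 4 = ((n / 1296 % 6 : Nat) : Fin 6) from rfl, Fin.val_natCast]; omega
  have e5 : rr n 5 = r 5 := by
    apply Fin.ext; rw [show rr n 5 = ((n / 7776 % 6 : Nat) : Fin 6) from rfl, Fin.val_natCast]; omega
  have hr : rr n = r := by
    funext i
    fin_cases i
    · exact e0
    · exact e1
    · exact e2
    · exact e3
    · exact e4
    · exact e5
  have hch : check n = true :=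
    allok (r 1).val (by have := hv 1; omega) (r 2).val (by have := hv 2; omega)
      (r 3).val (by have := hv 3; omega) (r 4).val (by have := hv 4; omega)
      (r 5).val (by have := hv 5; omega)
  unfold check at hch
  rw [hr] at hch
  have hcol : 4 ≤ ([r 0, r 1, r 2, r 3, r 4, r 5].dedup).length := by
    have himg : Finset.image r Finset.univ = [r 0, r 1, r 2, r 3, r 4, r 5].toFinset := by
      have huniv : (Finset.univ : Finset (Fin 6)) = {0,1,2,3,4,5} := by decide
      rw [huniv]
      simp [Finset.image_insert]
    rw [himg, List.card_toFinset] at hcard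
    exact hcard
  simp only [Bool.or_eq_true, Bool.not_eq_true', decide_eq_false_iff_not,
    decide_eq_true_eq] at hch
  rcases hch with h | h
  · exact absurd hcol h
  · exact h

theorem mem_S {C : Type*} (c : Sym2 (Fin 4) → C) (i : Fin 12) (h : rb (rOf c) i) :
    pathF i ∈ {E : Finset (Sym2 (Fin 4)) |
      ∃ x y z w : Fin 4, x ≠ y ∧ x ≠ z ∧ x ≠ w ∧ y ≠ z ∧ y ≠ w ∧ z ≠ w ∧
        E = {s(x, y), s(y, z), s(z, w)} ∧
        c s(x, y) ≠ c s(y, z) ∧ c s(y, z) ≠ c s(z, w) ∧ c s(x, y) ≠ c s(z, w)} := by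
  obtain ⟨h1, h2, h3⟩ := h
  obtain ⟨d1, d2, d3, d4, d5, d6⟩ := quad_distinct i
  obtain ⟨k1, k2, k3⟩ := consist i
  refine ⟨(quad i).1, (quad i).2.1, (quad i).2.2.1, (quad i).2.2.2,
    d1, d2, d3, d4, d5, d6, rfl, ?_, ?_, ?_⟩
  · rw [← k1, ← k2]
    exact fun hc => h1 ((rOf_eq_iff c _ _).1 hc)
  · rw [← k2, ← k3]
    exact fun hc => h2 ((rOf_eq_iff c _ _).1 hc)
  · rw [← k1, ← k3]
    exact fun hc => h3 ((rOf_eq_iff c _ _).1 hc)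

/-- If an edge-coloring of `K_4` uses at least 4 colors, then there are at least 4
distinct rainbow copies of `P_4` (distinct edge sets of spanning paths whose three
edges get pairwise distinct colors). -/
theorem stmt_14 {C : Type*} (c : Sym2 (Fin 4) → C)
    (hcolors : 4 ≤ Set.ncard {col : C | ∃ u v : Fin 4, u ≠ v ∧ c s(u, v) = col}) :
    4 ≤ Set.ncard {E : Finset (Sym2 (Fin 4)) |
      ∃ x y z w : Fin 4, x ≠ y ∧ x ≠ z ∧ x ≠ w ∧ y ≠ z ∧ y ≠ w ∧ z ≠ w ∧
        E = {s(x, y), s(y, z), s(z, w)} ∧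
        c s(x, y) ≠ c s(y, z) ∧ c s(y, z) ≠ c s(z, w) ∧ c s(x, y) ≠ c s(z, w)} := by
  classical
  set S := {E : Finset (Sym2 (Fin 4)) |
      ∃ x y z w : Fin 4, x ≠ y ∧ x ≠ z ∧ x ≠ w ∧ y ≠ z ∧ y ≠ w ∧ z ≠ w ∧
        E = {s(x, y), s(y, z), s(z, w)} ∧
        c s(x, y) ≠ c s(y, z) ∧ c s(y, z) ≠ c s(z, w) ∧ c s(x, y) ≠ c s(z, w)} with hS
  set r := rOf c with hrdef
  -- Step 1: translate the color hypothesis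
  have hset : {col : C | ∃ u v : Fin 4, u ≠ v ∧ c s(u, v) = col} =
      ↑(Finset.image (fun i => c (eV i)) Finset.univ) := by
    ext col
    simp only [Set.mem_setOf_eq, Finset.coe_image, Set.mem_image, Finset.mem_coe,
      Finset.mem_univ, true_and]
    constructor
    · rintro ⟨u, v, huv, hc⟩
      obtain ⟨i, hi⟩ := eV_surj u v huv
      exact ⟨i, by rw [hi, hc]⟩
    · rintro ⟨i, hi⟩
      obtain ⟨u, v, huv, he⟩ := eV_spec i
      exact ⟨u, v, huv, by rw [← he, hi]⟩
  rw [hset, Set.ncard_coe_finset] at hcolors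
  have hfac : Finset.image (fun i => c (eV i)) Finset.univ =
      Finset.image (fun i => c (eV i)) (Finset.image r Finset.univ) := by
    rw [Finset.image_image]
    exact (Finset.image_congr fun i _ => (c_rOf c i)).symm
  rw [hfac] at hcolors
  have hrcard : 4 ≤ (Finset.image r Finset.univ).card :=
    le_trans hcolors (Finset.card_image_le)
  -- Step 2: the combinatorial core
  have hkey := key_s14 r (fun i => rOf_le c i) hrcard
  -- Step 3: produce 4 distinct rainbow paths
  set lf := (List.finRange 12).filter (fun i => rb r i) with hlf
  have hnodup : lf.Nodup := (List.nodup_finRange 12).filter _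
  set t := lf.toFinset with ht
  have htcard : 4 ≤ t.card := by
    rw [ht, List.card_toFinset, hnodup.dedup]
    exact hkey
  have himcard : 4 ≤ (t.image pathF).card := by
    rw [Finset.card_image_of_injective t pathF_inj]
    exact htcard
  have hSfin : S.Finite := Set.toFinite S
  have hsub : t.image pathF ⊆ hSfin.toFinset := by
    intro E hE
    obtain ⟨i, hi, rfl⟩ := Finset.mem_image.1 hE
    rw [Set.Finite.mem_toFinset]
    have : rb r i := by
      have := List.mem_toFinset.1 hi
      rw [hlf] at this
      exact (List.mem_filter.1 this).2 |> of_decide_eq_true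
    exact mem_S c i this
  calc (4 : ℕ) ≤ (t.image pathF).card := himcard
  _ ≤ hSfin.toFinset.card := Finset.card_le_card hsub
  _ = S.ncard := (Set.ncard_eq_toFinset_card S hSfin).symm
end

section
/- The fourth OR-power of the Grötzsch graph M_4 = M(C_5) contains a clique of size 28; hence C_OR(M_4) ≥ 28^{1/4} > √5 = C_OR(C_5). -/
open Filter Topology

/-- The OR-product of two simple graphs: `(g₁,h₁) ~ (g₂,h₂)` iff the pairs differ and
they are adjacent in at least one coordinate. -/
def orProd {V W : Type*} (G : SimpleGraph V) (H : SimpleGraph W) :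
    SimpleGraph (V × W) where
  Adj p q := p ≠ q ∧ (G.Adj p.1 q.1 ∨ H.Adj p.2 q.2)
  symm := by
    constructor
    rintro p q ⟨hne, h | h⟩
    · exact ⟨hne.symm, Or.inl h.symm⟩
    · exact ⟨hne.symm, Or.inr h.symm⟩
  loopless := by constructor; rintro p ⟨hne, -⟩; exact hne rfl

/-- The `t`-fold OR-power of a simple graph. -/
def orPow {V : Type*} (G : SimpleGraph V) (t : ℕ) : SimpleGraph (Fin t → V) where
  Adj f g := f ≠ g ∧ ∃ i, G.Adj (f i) (g i)
  symm := by
    constructor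
    rintro f g ⟨hne, i, h⟩
    exact ⟨hne.symm, i, h.symm⟩
  loopless := by constructor; rintro f ⟨hne, -⟩; exact hne rfl

/-- The Mycielskian of a graph `G` on vertex set `V`: vertices `V ⊕ V ⊕ Unit`
(original vertices, twin vertices, apex `z`), with original edges, edges from the twin
`u_i` to the neighbors of `v_i`, and edges from every twin to the apex. -/
def mycielskian {V : Type*} (G : SimpleGraph V) : SimpleGraph (V ⊕ V ⊕ Unit) where
  Adj x y :=
    (∃ a b, G.Adj a b ∧ ((x = Sum.inl a ∧ y = Sum.inl b) ∨
      (x = Sum.inl a ∧ y = Sum.inr (Sum.inl b)) ∨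
      (x = Sum.inr (Sum.inl a) ∧ y = Sum.inl b))) ∨
    (∃ a : V, (x = Sum.inr (Sum.inl a) ∧ y = Sum.inr (Sum.inr ())) ∨
      (y = Sum.inr (Sum.inl a) ∧ x = Sum.inr (Sum.inr ())))
  symm := by
    constructor
    rintro x y (⟨a, b, hab, hc⟩ | ⟨a, hc⟩)
    · exact Or.inl ⟨b, a, hab.symm, by tauto⟩
    · exact Or.inr ⟨a, by tauto⟩
  loopless := by
    constructor
    rintro x (⟨a, b, hab, (⟨h1, h2⟩ | ⟨h1, h2⟩ | ⟨h1, h2⟩)⟩ | ⟨a, (⟨h1, h2⟩ | ⟨h1, h2⟩)⟩) <;>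
      rw [h1] at h2
    · injection h2 with h; exact G.loopless.irrefl _ (h ▸ hab)
    · simp at h2
    · simp at h2
    · simp at h2
    · simp at h2

/-- The five-cycle on `ZMod 5`. -/
def C5 : SimpleGraph (ZMod 5) where
  Adj a b := a - b = 1 ∨ b - a = 1
  symm := by constructor; rintro a b (h | h) <;> [exact Or.inr h; exact Or.inl h]
  loopless := by constructor; rintro a (h | h) <;> rw [sub_self] at h <;> exact absurd h (by decide)

/-- The Grötzsch graph `M₄ = M(C₅)`. -/
def grotzsch : SimpleGraph (ZMod 5 ⊕ ZMod 5 ⊕ Unit) := mycielskian C5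

abbrev Vtx := ZMod 5 ⊕ ZMod 5 ⊕ Unit

def v (a : ZMod 5) : Vtx := Sum.inl a
def u (a : ZMod 5) : Vtx := Sum.inr (Sum.inl a)
def z : Vtx := Sum.inr (Sum.inr ())

instance : DecidableRel C5.Adj := fun a b =>
  decidable_of_iff (a - b = 1 ∨ b - a = 1) Iff.rfl

set_option synthInstance.maxSize 1000 in
instance : DecidableRel grotzsch.Adj := fun x y =>
  decidable_of_iff ((∃ a b, C5.Adj a b ∧ ((x = Sum.inl a ∧ y = Sum.inl b) ∨
      (x = Sum.inl a ∧ y = Sum.inr (Sum.inl b)) ∨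
      (x = Sum.inr (Sum.inl a) ∧ y = Sum.inl b))) ∨
    (∃ a : ZMod 5, (x = Sum.inr (Sum.inl a) ∧ y = Sum.inr (Sum.inr ())) ∨
      (y = Sum.inr (Sum.inl a) ∧ x = Sum.inr (Sum.inr ())))) Iff.rfl

def bigClique : Finset (Fin 4 → Vtx) :=
  {![u 0, u 0, v 0, v 0],
   ![v 1, v 2, u 0, v 0],
   ![v 2, v 4, v 0, u 0],
   ![v 3, v 1, v 0, u 0],
   ![v 4, v 3, u 0, v 0],
   ![v 0, v 0, u 1, v 2],
   ![u 1, u 2, v 1, v 2],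
   ![v 2, v 4, u 1, v 2],
   ![v 3, v 1, v 1, u 2],
   ![v 4, v 3, v 1, u 2],
   ![v 0, v 0, v 2, u 4],
   ![v 1, v 2, u 2, v 4],
   ![u 2, u 4, v 2, v 4],
   ![v 3, v 1, u 2, v 4],
   ![v 4, v 3, v 2, u 4],
   ![v 0, v 0, v 3, u 1],
   ![v 1, v 2, v 3, u 1],
   ![v 2, v 4, u 3, v 1],
   ![u 3, u 1, v 3, v 1],
   ![v 4, v 3, u 3, v 1],
   ![v 0, v 0, u 4, v 3],
   ![v 1, v 2, v 4, u 3],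
   ![v 2, v 4, v 4, u 3],
   ![v 3, v 1, u 4, v 3],
   ![u 4, u 3, v 4, v 3],
   ![u 0, z, z, z],
   ![z, u 0, z, z],
   ![z, z, z, z]}

instance : DecidableRel (orPow grotzsch 4).Adj := fun f g =>
  decidable_of_iff (f ≠ g ∧ ∃ i, grotzsch.Adj (f i) (g i)) Iff.rfl

set_option maxHeartbeats 4000000 in
lemma bigClique_is : (orPow grotzsch 4).IsNClique 28 bigClique := by decide

lemma orPow_adj {V : Type*} (G : SimpleGraph V) {t : ℕ} {f g : Fin t → V} :
    (orPow G t).Adj f g ↔ f ≠ g ∧ ∃ i, G.Adj (f i) (g i) := Iff.rfl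

lemma clique_append {V : Type*} (G : SimpleGraph V) {a b m n : ℕ}
    {S : Finset (Fin a → V)} {T : Finset (Fin b → V)}
    (hS : (orPow G a).IsNClique m S) (hT : (orPow G b).IsNClique n T) :
    ∃ U : Finset (Fin (a + b) → V), (orPow G (a + b)).IsNClique (m * n) U := by
  classical
  refine ⟨(S ×ˢ T).image (fun p => Fin.append p.1 p.2), ?_, ?_⟩
  · rintro x hx y hy hxy
    simp only [Finset.coe_image, Set.mem_image, Finset.mem_coe, Finset.mem_product] at hx hy
    obtain ⟨⟨f, g⟩, ⟨hf, hg⟩, rfl⟩ := hx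
    obtain ⟨⟨f', g'⟩, ⟨hf', hg'⟩, rfl⟩ := hy
    refine ⟨hxy, ?_⟩
    by_cases hff : f = f'
    · subst hff
      have hgg : g ≠ g' := by rintro rfl; exact hxy rfl
      obtain ⟨-, i, hi⟩ := (orPow_adj G).mp (hT.isClique hg hg' hgg)
      exact ⟨Fin.natAdd a i, by simpa [Fin.append_right] using hi⟩
    · obtain ⟨-, i, hi⟩ := (orPow_adj G).mp (hS.isClique hf hf' hff)
      exact ⟨Fin.castAdd b i, by simpa [Fin.append_left] using hi⟩
  · rw [Finset.card_image_of_injOn, Finset.card_product, hS.card_eq, hT.card_eq]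
    intro p _ q _ hpq
    have h1 : p.1 = q.1 := funext fun i => by
      have := congrArg (fun f => f (Fin.castAdd b i)) hpq
      simpa [Fin.append_left] using this
    have h2 : p.2 = q.2 := funext fun i => by
      have := congrArg (fun f => f (Fin.natAdd a i)) hpq
      simpa [Fin.append_right] using this
    exact Prod.ext h1 h2

lemma clique_pow {V : Type*} (G : SimpleGraph V) {a m : ℕ}
    {S : Finset (Fin a → V)} (hS : (orPow G a).IsNClique m S) :
    ∀ k : ℕ, ∃ U : Finset (Fin (a * k) → V), (orPow G (a * k)).IsNClique (m ^ k) U := by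
  intro k
  induction k with
  | zero =>
    refine ⟨{Fin.elim0 ∘ (Fin.cast (Nat.mul_zero a))}, ?_, by simp⟩
    intro x hx y hy hxy
    exfalso
    apply hxy
    simp only [Finset.coe_singleton, Set.mem_singleton_iff] at hx hy
    rw [hx, hy]
  | succ n ih =>
    obtain ⟨U, hU⟩ := ih
    rw [pow_succ, Nat.mul_succ]
    exact clique_append G hU hS

/-- The fourth OR-power of the Grötzsch graph `M₄ = M(C₅)` contains a clique of
size 28; hence `C_OR(M₄) ≥ 28^{1/4} > √5 = C_OR(C₅)`. -/
theorem stmt_17 :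
    (∃ S : Finset (Fin 4 → (ZMod 5 ⊕ ZMod 5 ⊕ Unit)), (orPow grotzsch 4).IsNClique 28 S) ∧
    Real.sqrt 5 < (28 : ℝ) ^ ((1 : ℝ) / 4) ∧
    ∀ L : ℝ,
      Tendsto (fun t : ℕ => ((orPow grotzsch t).cliqueNum : ℝ) ^ ((1 : ℝ) / t))
        atTop (𝓝 L) →
      (28 : ℝ) ^ ((1 : ℝ) / 4) ≤ L := by
  refine ⟨⟨bigClique, bigClique_is⟩, ?_, ?_⟩
  · have h5 : Real.sqrt 5 = (25 : ℝ) ^ ((1 : ℝ) / 4) := by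
      rw [show (25:ℝ) = (5:ℝ) ^ (2:ℕ) by norm_num, ← Real.rpow_natCast (5:ℝ) 2,
        ← Real.rpow_mul (by norm_num), Real.sqrt_eq_rpow]
      norm_num
    rw [h5]
    exact Real.rpow_lt_rpow (by norm_num) (by norm_num) (by norm_num)
  · intro L hL
    have key : ∀ k : ℕ, (28 : ℝ) ^ ((1 : ℝ) / 4) ≤
        ((orPow grotzsch (4 * (k + 1))).cliqueNum : ℝ) ^ ((1 : ℝ) / (4 * (k + 1) : ℕ)) := by
      intro k
      obtain ⟨U, hU⟩ := clique_pow grotzsch bigClique_is (k + 1)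
      have hcard : (28 : ℕ) ^ (k + 1) ≤ (orPow grotzsch (4 * (k + 1))).cliqueNum := by
        have := hU.isClique.card_le_cliqueNum
        rwa [hU.card_eq] at this
      have hpos : (0 : ℝ) < ((4 * (k + 1) : ℕ) : ℝ) := by positivity
      have h1 : ((28 : ℝ) ^ ((28:ℕ)*0 + k + 1)) ^ ((1 : ℝ) / (4 * (k + 1) : ℕ)) ≤
          ((orPow grotzsch (4 * (k + 1))).cliqueNum : ℝ) ^ ((1 : ℝ) / (4 * (k + 1) : ℕ)) := by
        apply Real.rpow_le_rpow (by positivity) ?_ (by positivity)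
        calc ((28:ℝ) ^ ((28:ℕ)*0 + k + 1)) = (((28:ℕ) ^ (k+1) : ℕ) : ℝ) := by push_cast; ring_nf
        _ ≤ _ := by exact_mod_cast hcard
      refine le_trans (le_of_eq ?_) h1
      rw [← Real.rpow_natCast (28 : ℝ) ((28:ℕ)*0 + k + 1), ← Real.rpow_mul (by norm_num)]
      congr 1
      push_cast
      field_simp
      ring
    have htend : Tendsto (fun k : ℕ =>
        ((orPow grotzsch (4 * (k + 1))).cliqueNum : ℝ) ^ ((1 : ℝ) / (4 * (k + 1) : ℕ)))
        atTop (𝓝 L) := by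
      have h4 : Tendsto (fun k : ℕ => 4 * (k + 1)) atTop atTop :=
        tendsto_atTop_mono (fun k : ℕ => by omega : ∀ k : ℕ, k ≤ 4 * (k + 1)) tendsto_id
      exact hL.comp h4
    exact ge_of_tendsto' htend key
end

section
/- Any finite triangle-free graph G is an induced subgraph of the r-th Mycielski graph M_r for all sufficiently large r; consequently sup{C_OR(G) : G triangle-free} = lim_{r→∞} C_OR(M_r). -/
open Filter Topology

/-- The Shannon OR-capacity `C_OR(G) = lim_{t→∞} ω(G^t)^{1/t}`; by Fekete's lemma
(supermultiplicativity of the clique number under the OR-product) this limit exists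
and equals the supremum `⨆ t, ω(G^{t+1})^{1/(t+1)}`, which we take as the definition. -/
noncomputable def COR {V : Type*} (G : SimpleGraph V) : ℝ :=
  ⨆ t : ℕ, ((orPow G (t + 1)).cliqueNum : ℝ) ^ ((1 : ℝ) / (t + 1))

/-- The vertex set of the iterated Mycielski graph, starting from `K₂`
(so `MycV r` carries the `(r+2)`-chromatic Mycielski graph `M_{r+2}`). -/
def MycV : ℕ → Type
  | 0 => Fin 2
  | r + 1 => MycV r ⊕ MycV r ⊕ Unit

/-- The iterated Mycielski graphs: `MycG 0 = K₂` (`= M₂`) and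
`MycG (r+1) = M(MycG r)`. -/
def MycG : (r : ℕ) → SimpleGraph (MycV r)
  | 0 => ⊤
  | r + 1 => mycielskian (MycG r)

section Aux

open Sum

variable {V : Type*} {G : SimpleGraph V}

@[simp] lemma myc_adj_inl_inl {x y : V} :
    (mycielskian G).Adj (inl x) (inl y) ↔ G.Adj x y := by
  simp [mycielskian]

@[simp] lemma myc_adj_inl_u {x y : V} :
    (mycielskian G).Adj (inl x) (inr (inl y)) ↔ G.Adj x y := by
  constructor
  · rintro (⟨a, b, hab, hc⟩ | ⟨a, hc⟩) <;> simp_all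
  · intro h; exact Or.inl ⟨x, y, h, by tauto⟩

@[simp] lemma myc_adj_u_inl {x y : V} :
    (mycielskian G).Adj (inr (inl x)) (inl y) ↔ G.Adj x y := by
  constructor
  · rintro (⟨a, b, hab, hc⟩ | ⟨a, hc⟩) <;> simp_all
  · intro h; exact Or.inl ⟨x, y, h, by tauto⟩

@[simp] lemma myc_adj_u_u {x y : V} :
    ¬ (mycielskian G).Adj (inr (inl x)) (inr (inl y)) := by
  rintro (⟨a, b, hab, hc⟩ | ⟨a, hc⟩) <;> simp_all

@[simp] lemma myc_adj_u_z {x : V} :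
    (mycielskian G).Adj (inr (inl x)) (inr (inr ())) := by
  exact Or.inr ⟨x, by tauto⟩

@[simp] lemma myc_adj_z_u {x : V} :
    (mycielskian G).Adj (inr (inr ())) (inr (inl x)) := by
  exact Or.inr ⟨x, by tauto⟩

@[simp] lemma myc_adj_inl_z {x : V} :
    ¬ (mycielskian G).Adj (inl x) (inr (inr ())) := by
  rintro (⟨a, b, hab, hc⟩ | ⟨a, hc⟩) <;> simp_all

@[simp] lemma myc_adj_z_inl {x : V} :
    ¬ (mycielskian G).Adj (inr (inr ())) (inl x) := by
  rintro (⟨a, b, hab, hc⟩ | ⟨a, hc⟩) <;> simp_all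

end Aux
section Aux2

open Sum

variable {V : Type*} {W : Type*} {G : SimpleGraph V} {H : SimpleGraph W}

lemma cliqueFree3_iff (G : SimpleGraph V) :
    G.CliqueFree 3 ↔ ∀ a b c : V, G.Adj a b → G.Adj a c → G.Adj b c → False := by
  classical
  constructor
  · intro h a b c hab hac hbc
    exact h {a, b, c} (SimpleGraph.is3Clique_triple_iff.mpr ⟨hab, hac, hbc⟩)
  · intro h t ht
    rw [SimpleGraph.is3Clique_iff] at ht
    obtain ⟨a, b, c, hab, hac, hbc, -⟩ := ht
    exact h a b c hab hac hbc

lemma mycielskian_cliqueFree (hG : G.CliqueFree 3) : (mycielskian G).CliqueFree 3 := by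
  rw [cliqueFree3_iff] at hG ⊢
  rintro (a | a | ⟨⟩) (b | b | ⟨⟩) (c | c | ⟨⟩) hab hac hbc <;>
    (try simp only [myc_adj_inl_inl, myc_adj_inl_u, myc_adj_u_inl] at hab hac hbc) <;>
    first
      | exact myc_adj_u_u hab
      | exact myc_adj_u_u hac
      | exact myc_adj_u_u hbc
      | exact myc_adj_inl_z hab
      | exact myc_adj_inl_z hac
      | exact myc_adj_inl_z hbc
      | exact myc_adj_z_inl hab
      | exact myc_adj_z_inl hac
      | exact myc_adj_z_inl hbc
      | exact (mycielskian G).loopless.irrefl _ hab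
      | exact (mycielskian G).loopless.irrefl _ hac
      | exact (mycielskian G).loopless.irrefl _ hbc
      | exact hG _ _ _ hab hac hbc

instance instFintypeMycV : ∀ r, Fintype (MycV r)
  | 0 => inferInstanceAs (Fintype (Fin 2))
  | r + 1 => letI := instFintypeMycV r; inferInstanceAs (Fintype (MycV r ⊕ MycV r ⊕ Unit))

lemma mycG_cliqueFree : ∀ r, (MycG r).CliqueFree 3
  | 0 => SimpleGraph.cliqueFree_of_card_lt (by simp [MycV]; decide)
  | r + 1 => mycielskian_cliqueFree (mycG_cliqueFree r)

/-- The original graph is an induced subgraph of its Mycielskian. -/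
def mycInl (G : SimpleGraph V) : G ↪g mycielskian G :=
  ⟨⟨Sum.inl, Sum.inl_injective⟩, myc_adj_inl_inl⟩

def mycChain : ∀ {r s : ℕ}, r ≤ s → (MycG r ↪g MycG s) := by
  intro r s h
  induction s with
  | zero => exact Nat.le_zero.mp h ▸ SimpleGraph.Embedding.refl
  | succ s ih =>
      by_cases h' : r ≤ s
      · exact (mycInl (MycG s)).comp (ih h')
      · exact (Nat.le_antisymm h (Nat.not_le.mp h')) ▸ SimpleGraph.Embedding.refl

end Aux2
section Aux3

lemma embed_myc : ∀ (n : ℕ) (G : SimpleGraph (Fin n)), G.CliqueFree 3 →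
    Nonempty (G ↪g MycG n) := by
  intro n
  induction n with
  | zero => exact fun G _ => ⟨⟨⟨Fin.elim0, fun a => a.elim0⟩, fun {a} => a.elim0⟩⟩
  | succ n ih =>
    intro G hG
    classical
    have htri := (cliqueFree3_iff G).mp hG
    set G' : SimpleGraph (Fin n) := SimpleGraph.comap Fin.castSucc G with hG'def
    have embG' : G' ↪g G := ⟨⟨Fin.castSucc, Fin.castSucc_injective n⟩, Iff.rfl⟩
    obtain ⟨φ⟩ := ih G' (SimpleGraph.CliqueFree.comap ⟨embG'.toCopy⟩ hG)
    let f : Fin (n+1) → MycV (n+1) := fun i =>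
      Fin.lastCases (Sum.inr (Sum.inr ()))
        (fun j => if G.Adj j.castSucc (Fin.last n) then Sum.inr (Sum.inl (φ j))
          else Sum.inl (φ j)) i
    have hfl : f (Fin.last n) = Sum.inr (Sum.inr ()) := by exact Fin.lastCases_last
    have hfc : ∀ j : Fin n, f j.castSucc =
        if G.Adj j.castSucc (Fin.last n) then Sum.inr (Sum.inl (φ j))
          else Sum.inl (φ j) := by
      intro j; exact Fin.lastCases_castSucc ..
    have hinj : Function.Injective f := by
      intro a b hab
      induction a using Fin.lastCases with
      | last =>
        induction b using Fin.lastCases with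
        | last => rfl
        | cast j =>
          rw [hfl, hfc] at hab
          split_ifs at hab <;>
            first
              | exact (Sum.inr_ne_inl (Sum.inr_injective hab)).elim
              | exact (Sum.inr_ne_inl hab).elim
      | cast i =>
        induction b using Fin.lastCases with
        | last =>
          rw [hfl, hfc] at hab
          split_ifs at hab <;>
            first
              | exact (Sum.inl_ne_inr (Sum.inr_injective hab)).elim
              | exact (Sum.inl_ne_inr hab).elim
        | cast j =>
          rw [hfc, hfc] at hab
          split_ifs at hab <;>
            first
              | exact congrArg Fin.castSucc (φ.injective (Sum.inl_injective (Sum.inr_injective hab)))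
              | exact (Sum.inr_ne_inl hab).elim
              | exact (Sum.inl_ne_inr hab).elim
              | exact congrArg Fin.castSucc (φ.injective (Sum.inl_injective hab))
    have hadj : ∀ a b, (MycG (n+1)).Adj (f a) (f b) ↔ G.Adj a b := by
      intro a b
      show (mycielskian (MycG n)).Adj (f a) (f b) ↔ G.Adj a b
      induction a using Fin.lastCases with
      | last =>
        induction b using Fin.lastCases with
        | last => exact iff_of_false ((mycielskian (MycG n)).irrefl) (G.irrefl)
        | cast j =>
          rw [hfl, hfc]
          split_ifs with h
          · simpa using h.symm
          · simp only [myc_adj_z_inl]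
            exact iff_of_false (fun hh => hh) (fun hh => h hh.symm)
      | cast i =>
        induction b using Fin.lastCases with
        | last =>
          rw [hfl, hfc]
          split_ifs with h
          · simpa using h
          · simp only [myc_adj_inl_z]
            exact iff_of_false (fun hh => hh) (fun hh => h hh)
        | cast j =>
          rw [hfc, hfc]
          split_ifs with h1 h2
          · exact iff_of_false (myc_adj_u_u) (fun hij => htri _ _ _ hij h1 h2)
          · simp only [myc_adj_u_inl]
            exact φ.map_rel_iff
          · simp only [myc_adj_inl_u]
            exact φ.map_rel_iff
          · simp only [myc_adj_inl_inl]
            exact φ.map_rel_iff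
    exact ⟨⟨⟨f, hinj⟩, fun {a b} => hadj a b⟩⟩

end Aux3
section Aux4

variable {V W : Type*} {G : SimpleGraph V} {H : SimpleGraph W}

/-- An embedding of graphs induces an embedding of their OR-powers. -/
def orPowEmb (f : G ↪g H) (t : ℕ) : orPow G t ↪g orPow H t where
  toFun g := f ∘ g
  inj' a b h := funext fun i => f.injective (congrFun h i)
  map_rel_iff' := by
    intro a b
    show ((f ∘ a ≠ f ∘ b) ∧ ∃ i, H.Adj (f (a i)) (f (b i))) ↔
      (a ≠ b ∧ ∃ i, G.Adj (a i) (b i))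
    constructor
    · rintro ⟨hne, i, h⟩
      exact ⟨fun e => hne (by rw [e]), i, f.map_rel_iff.mp h⟩
    · rintro ⟨hne, i, h⟩
      exact ⟨fun e => hne (funext fun i => f.injective (congrFun e i)), i,
        f.map_rel_iff.mpr h⟩

lemma cliqueNum_le_card {α : Type*} [Fintype α] (G : SimpleGraph α) :
    G.cliqueNum ≤ Fintype.card α := by
  obtain ⟨s, hs⟩ := G.exists_isNClique_cliqueNum
  exact hs.card_eq ▸ Finset.card_le_univ s

lemma cliqueNum_mono [Fintype W] (f : G ↪g H) : G.cliqueNum ≤ H.cliqueNum := by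
  classical
  apply csSup_le'
  rintro m ⟨s, hs⟩
  have hle : G.map f.toEmbedding ≤ H := by
    rintro x y ⟨-, a, b, hab, rfl, rfl⟩
    exact f.map_rel_iff.mpr hab
  have hclique : H.IsClique ↑(s.map f.toEmbedding) := by
    have h1 : (G.map f.toEmbedding).IsClique (f.toEmbedding '' ↑s) := hs.1.map
    rw [Finset.coe_map]
    exact h1.mono hle
  calc m = (s.map f.toEmbedding).card := by rw [Finset.card_map, hs.2]
    _ ≤ H.cliqueNum := SimpleGraph.IsClique.card_le_cliqueNum (tc := hclique)

lemma cor_term_le [Fintype W] (H : SimpleGraph W) (t : ℕ) :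
    ((orPow H (t + 1)).cliqueNum : ℝ) ^ ((1 : ℝ) / (t + 1)) ≤
      max 1 (Fintype.card W : ℝ) := by
  classical
  have h1 : (orPow H (t + 1)).cliqueNum ≤ Fintype.card W ^ (t + 1) := by
    have h := cliqueNum_le_card (orPow H (t + 1))
    simpa [Fintype.card_fun] using h
  have h2 : ((orPow H (t + 1)).cliqueNum : ℝ) ^ ((1 : ℝ) / (t + 1)) ≤
      ((Fintype.card W ^ (t + 1) : ℕ) : ℝ) ^ ((1 : ℝ) / (t + 1)) :=
    Real.rpow_le_rpow (by positivity) (Nat.cast_le.mpr h1) (by positivity)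
  have h3 : ((Fintype.card W ^ (t + 1) : ℕ) : ℝ) ^ ((1 : ℝ) / (t + 1)) =
      (Fintype.card W : ℝ) := by
    push_cast
    rw [← Real.rpow_natCast (Fintype.card W : ℝ) (t + 1),
      ← Real.rpow_mul (by positivity)]
    have ht : ((t + 1 : ℕ) : ℝ) * ((1 : ℝ) / ((t : ℝ) + 1)) = 1 := by
      push_cast
      field_simp
    push_cast at ht ⊢
    rw [ht, Real.rpow_one]
  exact (h2.trans_eq h3).trans (le_max_right _ _)

lemma COR_mono [Fintype W] (f : G ↪g H) : COR G ≤ COR H := by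
  apply ciSup_le
  intro t
  have h1 : ((orPow G (t + 1)).cliqueNum : ℝ) ^ ((1 : ℝ) / (t + 1)) ≤
      ((orPow H (t + 1)).cliqueNum : ℝ) ^ ((1 : ℝ) / (t + 1)) :=
    Real.rpow_le_rpow (by positivity)
      (Nat.cast_le.mpr (cliqueNum_mono (orPowEmb f (t + 1)))) (by positivity)
  refine h1.trans ?_
  have hb : BddAbove (Set.range fun t : ℕ =>
      ((orPow H (t + 1)).cliqueNum : ℝ) ^ ((1 : ℝ) / (t + 1))) := by
    refine ⟨max 1 (Fintype.card W : ℝ), ?_⟩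
    rintro x ⟨u, rfl⟩
    exact cor_term_le H u
  exact le_ciSup (f := fun t : ℕ =>
    ((orPow H (t + 1)).cliqueNum : ℝ) ^ ((1 : ℝ) / (t + 1))) hb t

end Aux4

/-- Every finite triangle-free graph embeds as an induced subgraph into all
sufficiently large Mycielski graphs; consequently the supremum of the Shannon
OR-capacities of triangle-free graphs equals `lim_{r→∞} C_OR(M_r)`, the limit of the
(monotone) Shannon OR-capacities of the Mycielski graphs. -/
theorem stmt_19 :
    (∀ (n : ℕ) (G : SimpleGraph (Fin n)), G.CliqueFree 3 →
      ∃ r0 : ℕ, ∀ r, r0 ≤ r → Nonempty (G ↪g MycG r)) ∧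
    (⨆ p : {p : Σ n : ℕ, SimpleGraph (Fin n) // p.2.CliqueFree 3},
        ENNReal.ofReal (COR p.1.2)) = (⨆ r : ℕ, ENNReal.ofReal (COR (MycG r))) ∧
    Tendsto (fun r : ℕ => ENNReal.ofReal (COR (MycG r))) atTop
      (𝓝 (⨆ r : ℕ, ENNReal.ofReal (COR (MycG r)))) := by
  have part1 : ∀ (n : ℕ) (G : SimpleGraph (Fin n)), G.CliqueFree 3 →
      ∃ r0 : ℕ, ∀ r, r0 ≤ r → Nonempty (G ↪g MycG r) := by
    intro n G hG
    obtain ⟨φ⟩ := embed_myc n G hG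
    exact ⟨n, fun r hr => ⟨(mycChain hr).comp φ⟩⟩
  have hmono : Monotone fun r : ℕ => ENNReal.ofReal (COR (MycG r)) := by
    intro r s hrs
    exact ENNReal.ofReal_le_ofReal (COR_mono (mycChain hrs))
  refine ⟨part1, ?_, tendsto_atTop_iSup hmono⟩
  apply le_antisymm
  · apply iSup_le
    rintro ⟨⟨n, G⟩, hG⟩
    obtain ⟨φ⟩ := embed_myc n G hG
    exact le_trans (ENNReal.ofReal_le_ofReal (COR_mono φ))
      (le_iSup (fun r => ENNReal.ofReal (COR (MycG r))) n)
  · apply iSup_le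
    intro r
    classical
    let e := (Fintype.equivFin (MycV r)).symm
    let Gr : SimpleGraph (Fin (Fintype.card (MycV r))) := (MycG r).comap e
    have iso : Gr ≃g MycG r := ⟨e, fun {a b} => Iff.rfl⟩
    have hfree : Gr.CliqueFree 3 :=
      SimpleGraph.CliqueFree.comap ⟨iso.toEmbedding.toCopy⟩ (mycG_cliqueFree r)
    have hle : COR (MycG r) ≤ COR Gr := COR_mono iso.symm.toEmbedding
    exact le_trans (ENNReal.ofReal_le_ofReal hle)
      (le_iSup (fun p : {p : Σ n : ℕ, SimpleGraph (Fin n) // p.2.CliqueFree 3} =>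
        ENNReal.ofReal (COR p.1.2)) ⟨⟨_, Gr⟩, hfree⟩)
end
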